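/- arXiv:2204.08629 — 4 statements merged into one kernel-verified Lean document; each statement's English description precedes it below -/
import Mathlib

section
/- For a complex m×n matrix A with singular values σ_1 ≥ σ_2 ≥ ... ≥ σ_{min(m,n)}, and for any r ≤ min(m,n) and any matrices P ∈ C^{r×m}, Q ∈ C^{r×n} with P Pᴴ = I_r and Q Qᴴ = I_r, the trace satisfies |trace(P A Qᴴ)| ≤ σ_1 + ... + σ_r. -/
open Matrix
open scoped ComplexOrder

private lemma diag_ctm {k l : Type*} [Fintype k] (M : Matrix k l ℂ) (j : l) :
    (Mᴴ * M) j j = ((∑ i, Complex.normSq (M i j) : ℝ) : ℂ) := by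
  rw [Matrix.mul_apply]
  push_cast
  refine Finset.sum_congr rfl fun i _ => ?_
  rw [Matrix.conjTranspose_apply, RCLike.star_def, ← Complex.normSq_eq_conj_mul_self]

private lemma rearrange {n r : ℕ} (hr : r ≤ n) (σ u : Fin n → ℝ) (hσ : Antitone σ)
    (hσ0 : ∀ i, 0 ≤ σ i) (hu0 : ∀ i, 0 ≤ u i) (hu1 : ∀ i, u i ≤ 1)
    (hsum : ∑ i, u i ≤ r) :
    ∑ i, σ i * u i ≤ ∑ i : Fin r, σ (Fin.castLE hr i) := by
  rcases Nat.eq_zero_or_pos r with hr0 | hrpos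
  · subst hr0
    simp only [Finset.univ_eq_empty, Finset.sum_empty]
    have hz : ∀ i : Fin n, u i = 0 := by
      intro i
      by_contra h
      have : (0:ℝ) < ∑ i, u i := by
        refine Finset.sum_pos' (fun j _ => hu0 j) ⟨i, Finset.mem_univ i, ?_⟩
        exact lt_of_le_of_ne (hu0 i) (Ne.symm h)
      simp at hsum; linarith
    simp [hz]
  · have hn : 0 < n := lt_of_lt_of_le hrpos hr
    set c : ℝ := σ ⟨r - 1, by omega⟩ with hc
    have hc0 : 0 ≤ c := hσ0 _
    set emb : Fin r ↪ Fin n := ⟨Fin.castLE hr, Fin.castLE_injective hr⟩ with hemb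
    set S : Finset (Fin n) := Finset.univ.map emb with hS
    have hcard : S.card = r := by simp [hS]
    have hmem : ∀ i : Fin n, i ∈ S ↔ (i : ℕ) < r := by
      intro i
      simp only [hS, Finset.mem_map, Finset.mem_univ, true_and, hemb]
      constructor
      · rintro ⟨j, hj⟩
        simpa [← hj] using j.2
      · intro h
        exact ⟨⟨(i : ℕ), h⟩, by ext; simp⟩
    have hRHS : ∑ i : Fin r, σ (Fin.castLE hr i) = ∑ i ∈ S, σ i := by
      rw [hS, Finset.sum_map]; rfl
    -- bounds relative to c
    have hge : ∀ i ∈ S, c ≤ σ i := by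
      intro i hi
      apply hσ
      have hlt := (hmem i).1 hi
      simp only [Fin.le_def, Fin.val_mk]
      omega
    have hle : ∀ i ∈ Sᶜ, σ i ≤ c := by
      intro i hi
      apply hσ
      have : ¬ (i : ℕ) < r := fun h => by simp [hmem i, h] at hi
      simp [Fin.le_def]; omega
    have split : ∑ i ∈ S, (σ i * u i) + ∑ i ∈ Sᶜ, (σ i * u i) = ∑ i, σ i * u i :=
      Finset.sum_add_sum_compl S _
    have splitu : ∑ i ∈ S, u i + ∑ i ∈ Sᶜ, u i = ∑ i, u i :=
      Finset.sum_add_sum_compl S _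
    have h1 : ∑ i ∈ S, (σ i * u i) ≤ ∑ i ∈ S, σ i - c * (S.card - ∑ i ∈ S, u i) := by
      have : ∑ i ∈ S, (σ i - σ i * u i) ≥ ∑ i ∈ S, (c - c * u i) := by
        refine Finset.sum_le_sum fun i hi => ?_
        have h1 := hge i hi
        have h2 := hu1 i
        nlinarith [hu0 i]
      rw [Finset.sum_sub_distrib] at this
      have e2 : ∑ i ∈ S, (c - c * u i) = c * S.card - c * ∑ i ∈ S, u i := by
        rw [Finset.sum_sub_distrib, ← Finset.mul_sum]
        simp [mul_comm]
      rw [e2] at this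
      linarith
    have h2 : ∑ i ∈ Sᶜ, (σ i * u i) ≤ c * ∑ i ∈ Sᶜ, u i := by
      rw [Finset.mul_sum]
      refine Finset.sum_le_sum fun i hi => ?_
      have := hle i hi
      nlinarith [hu0 i]
    rw [hRHS]
    have hcr : (S.card : ℝ) = r := by rw [hcard]
    nlinarith [split, splitu, h1, h2, hsum]

set_option maxHeartbeats 2000000 in
theorem truncated_trace_inequality {m n r : ℕ} (A : Matrix (Fin m) (Fin n) ℂ)
    (σ : Fin n → ℝ) (hσ : Antitone σ)
    (hsv : ∃ e : Equiv.Perm (Fin n), ∀ i,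
      σ i = Real.sqrt
        ((Matrix.posSemidef_conjTranspose_mul_self A).isHermitian.eigenvalues (e i)))
    (hr : r ≤ min m n)
    (P : Matrix (Fin r) (Fin m) ℂ) (Q : Matrix (Fin r) (Fin n) ℂ)
    (hP : P * Pᴴ = 1) (hQ : Q * Qᴴ = 1) :
    ‖(P * A * Qᴴ).trace‖ ≤
      ∑ i : Fin r, σ (Fin.castLE (hr.trans (min_le_right m n)) i) := by
  classical
  obtain ⟨e, he⟩ := hsv
  have hrn : r ≤ n := hr.trans (min_le_right m n)
  set hPSD := Matrix.posSemidef_conjTranspose_mul_self A with hPSDdef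
  set lam : Fin n → ℝ := hPSD.isHermitian.eigenvalues with hlamdef
  have hlam0 : ∀ j, 0 ≤ lam j := fun j => hPSD.eigenvalues_nonneg j
  set W : Matrix (Fin n) (Fin n) ℂ :=
    (Matrix.IsHermitian.eigenvectorUnitary hPSD.isHermitian : Matrix (Fin n) (Fin n) ℂ) with hWdef
  have hW1 : W * Wᴴ = 1 := by
    rw [← Matrix.star_eq_conjTranspose]
    exact (Matrix.mem_unitaryGroup_iff).mp
      (Matrix.IsHermitian.eigenvectorUnitary hPSD.isHermitian).2
  have hW2 : Wᴴ * W = 1 := by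
    rw [← Matrix.star_eq_conjTranspose]
    exact (Matrix.mem_unitaryGroup_iff').mp
      (Matrix.IsHermitian.eigenvectorUnitary hPSD.isHermitian).2
  have hdiag : Wᴴ * (Aᴴ * A) * W = Matrix.diagonal (fun j => (lam j : ℂ)) := by
    rw [← Matrix.star_eq_conjTranspose]
    have := hPSD.isHermitian.conjStarAlgAut_star_eigenvectorUnitary
    simp only [Unitary.conjStarAlgAut_star_apply, Unitary.coe_star] at this
    exact this
  -- general cancellation lemmas
  have hPcancel : ∀ {l : Type} [Fintype l] (X : Matrix (Fin r) l ℂ), P * (Pᴴ * X) = X := by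
    intro l _ X; rw [← Matrix.mul_assoc, hP, Matrix.one_mul]
  have hQcancel : ∀ {l : Type} [Fintype l] (X : Matrix (Fin r) l ℂ), Q * (Qᴴ * X) = X := by
    intro l _ X; rw [← Matrix.mul_assoc, hQ, Matrix.one_mul]
  set QW := Q * W with hQWdef
  set PAW := P * A * W with hPAWdef
  set aSq : Fin n → ℝ := fun j => ∑ k, Complex.normSq (QW k j) with haSqdef
  set bSq : Fin n → ℝ := fun j => ∑ k, Complex.normSq (PAW k j) with hbSqdef
  have haSq0 : ∀ j, 0 ≤ aSq j := fun j => Finset.sum_nonneg fun k _ => Complex.normSq_nonneg _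
  have hbSq0 : ∀ j, 0 ≤ bSq j := fun j => Finset.sum_nonneg fun k _ => Complex.normSq_nonneg _
  -- F4 : bSq j ≤ lam j
  have key4 : PAWᴴ * PAW +
      (((1 : Matrix (Fin m) (Fin m) ℂ) - Pᴴ * P) * (A * W))ᴴ *
        (((1 : Matrix (Fin m) (Fin m) ℂ) - Pᴴ * P) * (A * W)) = Wᴴ * (Aᴴ * A) * W := by
    simp only [hPAWdef, Matrix.conjTranspose_mul, Matrix.conjTranspose_sub,
      Matrix.conjTranspose_one, Matrix.conjTranspose_conjTranspose,
      Matrix.mul_sub, Matrix.sub_mul, Matrix.mul_assoc, Matrix.one_mul, Matrix.mul_one,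
      hPcancel]
    abel
  have hbSq_le : ∀ j, bSq j ≤ lam j := by
    intro j
    have h1 := congrArg (fun M : Matrix (Fin n) (Fin n) ℂ => (M j j).re) key4
    simp only [Matrix.add_apply, Complex.add_re, hdiag] at h1
    rw [diag_ctm, diag_ctm] at h1
    simp [Matrix.diagonal_apply_eq] at h1
    have h2 : 0 ≤ ∑ i, Complex.normSq ((((1 : Matrix (Fin m) (Fin m) ℂ) - Pᴴ * P) * (A * W)) i j) :=
      Finset.sum_nonneg fun k _ => Complex.normSq_nonneg _
    rw [hbSqdef]
    simp only []
    linarith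
  -- F3 : aSq j ≤ 1
  have key3 : QWᴴ * QW +
      (((1 : Matrix (Fin n) (Fin n) ℂ) - Qᴴ * Q) * W)ᴴ *
        (((1 : Matrix (Fin n) (Fin n) ℂ) - Qᴴ * Q) * W) = (1 : Matrix (Fin n) (Fin n) ℂ) := by
    have : Wᴴ * W = (1 : Matrix (Fin n) (Fin n) ℂ) := hW2
    simp only [hQWdef, Matrix.conjTranspose_mul, Matrix.conjTranspose_sub,
      Matrix.conjTranspose_one, Matrix.conjTranspose_conjTranspose,
      Matrix.mul_sub, Matrix.sub_mul, Matrix.mul_assoc, Matrix.one_mul, Matrix.mul_one,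
      hQcancel, hW2, this]
    abel
  have haSq_le : ∀ j, aSq j ≤ 1 := by
    intro j
    have h1 := congrArg (fun M : Matrix (Fin n) (Fin n) ℂ => (M j j).re) key3
    simp only [Matrix.add_apply, Complex.add_re] at h1
    rw [diag_ctm, diag_ctm] at h1
    simp [Matrix.one_apply_eq] at h1
    have h2 : 0 ≤ ∑ i, Complex.normSq ((((1 : Matrix (Fin n) (Fin n) ℂ) - Qᴴ * Q) * W) i j) :=
      Finset.sum_nonneg fun k _ => Complex.normSq_nonneg _
    rw [haSqdef]; simp only []; linarith
  -- F2 : ∑ aSq = r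
  have haSq_sum : ∑ j, aSq j = r := by
    have h1 : (QWᴴ * QW).trace = ((∑ j, aSq j : ℝ) : ℂ) := by
      rw [Matrix.trace]
      push_cast
      refine Finset.sum_congr rfl fun j _ => ?_
      simpa [Matrix.diag, haSqdef] using diag_ctm QW j
    have h2 : (QWᴴ * QW).trace = r := by
      rw [Matrix.trace_mul_comm]
      have : QW * QWᴴ = (1 : Matrix (Fin r) (Fin r) ℂ) := by
        rw [hQWdef, Matrix.conjTranspose_mul, Matrix.mul_assoc, ← Matrix.mul_assoc W Wᴴ Qᴴ,
          hW1, Matrix.one_mul, hQ]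
      rw [this, Matrix.trace_one]
      simp
    rw [h2] at h1
    exact_mod_cast h1.symm
  -- the G machinery for F5
  set g : Fin n → ℝ := fun j => if lam j = 0 then 0 else 1 / Real.sqrt (lam j) with hgdef
  set eps : Fin n → ℝ := fun j => if lam j = 0 then 0 else 1 with hepsdef
  set Gc : Matrix (Fin n) (Fin n) ℂ := Matrix.diagonal (fun j => (g j : ℂ)) with hGcdef
  set G : Matrix (Fin m) (Fin n) ℂ := A * W * Gc with hGdef
  set E : Matrix (Fin n) (Fin n) ℂ := Matrix.diagonal (fun j => (eps j : ℂ)) with hEdef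
  have hGcH : Gcᴴ = Gc := by
    rw [hGcdef, Matrix.diagonal_conjTranspose]
    refine congrArg Matrix.diagonal (funext fun j => ?_)
    rw [Pi.star_apply, Complex.star_def]
    exact Complex.conj_ofReal _
  have hAW : (A * W)ᴴ * (A * W) = Matrix.diagonal (fun j => (lam j : ℂ)) := by
    rw [Matrix.conjTranspose_mul, Matrix.mul_assoc, ← Matrix.mul_assoc Aᴴ A W,
      ← Matrix.mul_assoc]
    exact hdiag
  have hgle : ∀ j, g j * lam j * g j = eps j := by
    intro j
    by_cases h : lam j = 0
    · simp [hgdef, hepsdef, h]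
    · have hpos : 0 < lam j := lt_of_le_of_ne (hlam0 j) (Ne.symm h)
      have hs : Real.sqrt (lam j) ≠ 0 := by positivity
      simp only [hgdef, hepsdef, if_neg h]
      field_simp
      rw [Real.sq_sqrt (hlam0 j)]
  have hGtG : Gᴴ * G = E := by
    rw [hGdef, Matrix.conjTranspose_mul, hGcH]
    have h1 : Gc * (A * W)ᴴ * (A * W * Gc) = Gc * ((A * W)ᴴ * (A * W)) * Gc := by
      simp only [Matrix.mul_assoc]
    rw [h1, hAW, hGcdef, hEdef, Matrix.diagonal_mul_diagonal, Matrix.diagonal_mul_diagonal]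
    refine congrArg Matrix.diagonal (funext fun j => ?_)
    rw [← hgle j]
    push_cast
    ring
  have hGE : G * E = G := by
    have hce : Gc * E = Gc := by
      rw [hGcdef, hEdef, Matrix.diagonal_mul_diagonal]
      refine congrArg Matrix.diagonal (funext fun j => ?_)
      by_cases h : lam j = 0 <;> simp [hgdef, hepsdef, h]
    rw [hGdef, Matrix.mul_assoc, hce]
  have hGtGc : ∀ (X : Matrix (Fin n) (Fin r) ℂ), Gᴴ * (G * X) = E * X := by
    intro X; rw [← Matrix.mul_assoc, hGtG]
  have hGEc : ∀ (X : Matrix (Fin n) (Fin r) ℂ), G * (E * X) = G * X := by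
    intro X; rw [← Matrix.mul_assoc, hGE]
  have keyid : (P * G) * (P * G)ᴴ +
      (((1 : Matrix (Fin m) (Fin m) ℂ) - G * Gᴴ) * Pᴴ)ᴴ *
        (((1 : Matrix (Fin m) (Fin m) ℂ) - G * Gᴴ) * Pᴴ) = (1 : Matrix (Fin r) (Fin r) ℂ) := by
    simp only [Matrix.conjTranspose_mul, Matrix.conjTranspose_sub, Matrix.conjTranspose_one,
      Matrix.conjTranspose_conjTranspose, Matrix.mul_sub, Matrix.sub_mul,
      Matrix.mul_assoc, Matrix.one_mul, Matrix.mul_one, hGtGc, hGEc, hP]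
    abel
  -- columns of P*G
  have hPGcol : ∀ j, (∑ k, Complex.normSq ((P * G) k j)) = g j ^ 2 * bSq j := by
    intro j
    have hm : P * G = PAW * Gc := by
      rw [hGdef, hPAWdef]
      simp only [Matrix.mul_assoc]
    have hentry : ∀ k, (P * G) k j = PAW k j * (g j : ℂ) := by
      intro k
      rw [hm, hGcdef, Matrix.mul_diagonal]
    simp only [hentry, Complex.normSq_mul, Complex.normSq_ofReal, hbSqdef]
    rw [← Finset.sum_mul]
    ring
  have hsum5 : ∑ j, g j ^ 2 * bSq j ≤ (r : ℝ) := by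
    have tr1 : ((P * G)ᴴ * (P * G)).trace = ((∑ j, g j ^ 2 * bSq j : ℝ) : ℂ) := by
      rw [Matrix.trace]
      push_cast
      refine Finset.sum_congr rfl fun j _ => ?_
      have hd := diag_ctm (P * G) j
      rw [hPGcol j] at hd
      rw [Matrix.diag]
      rw [hd]
      push_cast
      ring
    have tr2 := congrArg Matrix.trace keyid
    rw [Matrix.trace_add, Matrix.trace_one] at tr2
    have tr3 : ((P * G) * (P * G)ᴴ).trace = ((P * G)ᴴ * (P * G)).trace :=
      Matrix.trace_mul_comm _ _
    set K := ((1 : Matrix (Fin m) (Fin m) ℂ) - G * Gᴴ) * Pᴴ with hKdef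
    have tr4 : (Kᴴ * K).trace = ((∑ j, ∑ i, Complex.normSq (K i j) : ℝ) : ℂ) := by
      rw [Matrix.trace]
      push_cast
      refine Finset.sum_congr rfl fun j _ => ?_
      rw [Matrix.diag, diag_ctm K j]
      push_cast
      ring
    have h0 : (0:ℝ) ≤ ∑ j, ∑ i, Complex.normSq (K i j) :=
      Finset.sum_nonneg fun j _ => Finset.sum_nonneg fun i _ => Complex.normSq_nonneg _
    rw [tr3, tr1, tr4] at tr2
    have hcast : (∑ j, g j ^ 2 * bSq j) + (∑ j, ∑ i, Complex.normSq (K i j)) = (r : ℝ) := by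
      have : (((∑ j, g j ^ 2 * bSq j) + (∑ j, ∑ i, Complex.normSq (K i j)) : ℝ) : ℂ)
          = ((r : ℝ) : ℂ) := by
        rw [Complex.ofReal_add, tr2]
        simp
      exact_mod_cast this
    linarith
  have hgb_le : ∀ j, g j ^ 2 * bSq j ≤ 1 := by
    intro j
    by_cases h : lam j = 0
    · have : g j = 0 := by simp [hgdef, h]
      rw [this]
      norm_num
    · have hpos : 0 < lam j := lt_of_le_of_ne (hlam0 j) (Ne.symm h)
      have hg2 : g j ^ 2 = 1 / lam j := by
        simp only [hgdef, if_neg h]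
        rw [div_pow, one_pow, Real.sq_sqrt (hlam0 j)]
      rw [hg2, div_mul_eq_mul_div, one_mul, div_le_one hpos]
      exact hbSq_le j
  -- t-values
  set t : Fin n → ℝ := fun j => (aSq j + g j ^ 2 * bSq j) / 2 with htdef
  have ht0 : ∀ j, 0 ≤ t j := by
    intro j
    have := haSq0 j
    have h2 : 0 ≤ g j ^ 2 * bSq j := mul_nonneg (sq_nonneg _) (hbSq0 j)
    rw [htdef]
    dsimp only
    linarith
  have ht1 : ∀ j, t j ≤ 1 := by
    intro j
    have := haSq_le j
    have h2 := hgb_le j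
    rw [htdef]
    dsimp only
    linarith
  have htsum : ∑ j, t j ≤ (r : ℝ) := by
    have : ∑ j, t j = ((∑ j, aSq j) + ∑ j, g j ^ 2 * bSq j) / 2 := by
      rw [htdef]
      rw [← Finset.sum_add_distrib, ← Finset.sum_div]
    rw [this, haSq_sum]
    linarith [hsum5]
  -- trace identity
  have htr : (P * A * Qᴴ).trace = (QWᴴ * PAW).trace := by
    have h1 : QWᴴ * PAW = Wᴴ * ((Qᴴ * (P * A)) * W) := by
      rw [hQWdef, hPAWdef, Matrix.conjTranspose_mul]
      simp only [Matrix.mul_assoc]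
    rw [h1, Matrix.trace_mul_comm Wᴴ, Matrix.mul_assoc (Qᴴ * (P * A)) W Wᴴ, hW1,
      Matrix.mul_one, Matrix.trace_mul_comm Qᴴ]
  -- per-column Cauchy-Schwarz and the key estimate
  have hstep : ∀ j, ‖(QWᴴ * PAW) j j‖ ≤ Real.sqrt (lam j) * t j := by
    intro j
    have hcs : ‖(QWᴴ * PAW) j j‖ ≤ Real.sqrt (aSq j) * Real.sqrt (bSq j) := by
      rw [Matrix.mul_apply]
      calc ‖∑ k, QWᴴ j k * PAW k j‖
          ≤ ∑ k, ‖QWᴴ j k * PAW k j‖ := norm_sum_le _ _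
        _ = ∑ k, ‖QW k j‖ * ‖PAW k j‖ := by
            refine Finset.sum_congr rfl fun k _ => ?_
            rw [Matrix.conjTranspose_apply, RCLike.star_def, norm_mul,
              Complex.norm_conj]
        _ ≤ Real.sqrt (∑ k, ‖QW k j‖ ^ 2) *
              Real.sqrt (∑ k, ‖PAW k j‖ ^ 2) :=
            Real.sum_mul_le_sqrt_mul_sqrt _ _ _
        _ = Real.sqrt (aSq j) * Real.sqrt (bSq j) := by
            rw [haSqdef, hbSqdef]
            simp [Complex.sq_norm]
    have htj0 := ht0 j
    by_cases h : lam j = 0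
    · have hb0 : bSq j = 0 := le_antisymm (h ▸ hbSq_le j) (hbSq0 j)
      rw [hb0, Real.sqrt_zero, mul_zero] at hcs
      exact le_trans hcs (mul_nonneg (Real.sqrt_nonneg _) htj0)
    · have hpos : 0 < lam j := lt_of_le_of_ne (hlam0 j) (Ne.symm h)
      have hsl : 0 < Real.sqrt (lam j) := Real.sqrt_pos.2 hpos
      have heq : Real.sqrt (lam j) * g j = 1 := by
        simp only [hgdef, if_neg h]
        rw [mul_one_div, div_self (ne_of_gt hsl)]
      have key : Real.sqrt (aSq j) * (g j * Real.sqrt (bSq j)) ≤ t j := by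
        have h1 : Real.sqrt (aSq j) ^ 2 = aSq j := Real.sq_sqrt (haSq0 j)
        have h2 : (g j * Real.sqrt (bSq j)) ^ 2 = g j ^ 2 * bSq j := by
          rw [mul_pow, Real.sq_sqrt (hbSq0 j)]
        rw [htdef]
        dsimp only
        nlinarith [sq_nonneg (Real.sqrt (aSq j) - g j * Real.sqrt (bSq j))]
      have hrw : Real.sqrt (aSq j) * Real.sqrt (bSq j)
          = Real.sqrt (lam j) * (Real.sqrt (aSq j) * (g j * Real.sqrt (bSq j))) := by
        have : Real.sqrt (lam j) * (Real.sqrt (aSq j) * (g j * Real.sqrt (bSq j)))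
            = (Real.sqrt (lam j) * g j) * (Real.sqrt (aSq j) * Real.sqrt (bSq j)) := by ring
        rw [this, heq, one_mul]
      calc ‖(QWᴴ * PAW) j j‖ ≤ Real.sqrt (aSq j) * Real.sqrt (bSq j) := hcs
        _ = Real.sqrt (lam j) * (Real.sqrt (aSq j) * (g j * Real.sqrt (bSq j))) := hrw
        _ ≤ Real.sqrt (lam j) * t j := mul_le_mul_of_nonneg_left key (Real.sqrt_nonneg _)
  -- assemble
  have hfinal : ‖(P * A * Qᴴ).trace‖ ≤ ∑ j, Real.sqrt (lam j) * t j := by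
    rw [htr, Matrix.trace]
    calc ‖∑ j, (QWᴴ * PAW).diag j‖
        ≤ ∑ j, ‖(QWᴴ * PAW).diag j‖ := norm_sum_le _ _
      _ ≤ ∑ j, Real.sqrt (lam j) * t j := Finset.sum_le_sum fun j _ => hstep j
  have hperm : ∑ j, Real.sqrt (lam j) * t j = ∑ i, σ i * t (e i) := by
    rw [← Equiv.sum_comp e (fun j => Real.sqrt (lam j) * t j)]
    refine Finset.sum_congr rfl fun i _ => ?_
    rw [he i]
  have hsend := rearrange hrn σ (fun i => t (e i)) hσ
    (fun i => by rw [he i]; exact Real.sqrt_nonneg _)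
    (fun i => ht0 _) (fun i => ht1 _)
    (by rw [Equiv.sum_comp e t]; exact htsum)
  calc ‖(P * A * Qᴴ).trace‖ ≤ ∑ j, Real.sqrt (lam j) * t j := hfinal
    _ = ∑ i, σ i * t (e i) := hperm
    _ ≤ ∑ i : Fin r, σ (Fin.castLE hrn i) := hsend
end

section
/- For a complex m×n matrix A of rank r' and any r ≤ min(m,n), the maximum of |trace(P A Qᴴ)| over matrices P ∈ C^{r×m}, Q ∈ C^{r×n} satisfying P Pᴴ = I_r and Q Qᴴ = I_r equals σ_1 + ... + σ_r, the sum of the r largest singular values of A; the maximum is attained by taking P and Q to be the conjugate transposes of the first r left and right singular vectors of A. -/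
open Matrix Finset

lemma key_bound (m r : ℕ) (hr : r ≤ m) (σ : ℕ → ℝ) (hσ0 : ∀ k, 0 ≤ σ k)
    (hσa : Antitone σ) (d : ℕ → ℝ) (hd0 : ∀ k, 0 ≤ d k) (hd1 : ∀ k, d k ≤ 1)
    (hdsum : ∑ k ∈ Finset.range m, d k ≤ (r : ℝ)) :
    ∑ k ∈ Finset.range m, σ k * d k ≤ ∑ i ∈ Finset.range r, σ i := by
  have hs1 := Finset.sum_range_add_sum_Ico (fun k => σ k * d k) hr
  have hs2 := Finset.sum_range_add_sum_Ico d hr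
  have h1 : ∑ k ∈ Finset.Ico r m, σ k * d k ≤ σ r * ∑ k ∈ Finset.Ico r m, d k := by
    rw [Finset.mul_sum]
    refine Finset.sum_le_sum fun k hk => ?_
    exact mul_le_mul_of_nonneg_right (hσa (Finset.mem_Ico.mp hk).1) (hd0 k)
  have h2 : ∑ k ∈ Finset.Ico r m, d k ≤ ∑ k ∈ Finset.range r, (1 - d k) := by
    rw [Finset.sum_sub_distrib, Finset.sum_const, Finset.card_range, nsmul_eq_mul, mul_one]
    linarith
  have h3 : σ r * ∑ k ∈ Finset.range r, (1 - d k) ≤ ∑ k ∈ Finset.range r, σ k * (1 - d k) := by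
    rw [Finset.mul_sum]
    refine Finset.sum_le_sum fun k hk => ?_
    have hk' : k ≤ r := le_of_lt (Finset.mem_range.mp hk)
    have : (0:ℝ) ≤ 1 - d k := by linarith [hd1 k]
    exact mul_le_mul_of_nonneg_right (hσa hk') this
  have h4 : σ r * ∑ k ∈ Finset.Ico r m, d k ≤ σ r * ∑ k ∈ Finset.range r, (1 - d k) :=
    mul_le_mul_of_nonneg_left h2 (hσ0 r)
  have h5 : ∑ k ∈ Finset.range r, σ k * d k + ∑ k ∈ Finset.range r, σ k * (1 - d k)
      = ∑ i ∈ Finset.range r, σ i := by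
    rw [← Finset.sum_add_distrib]
    exact Finset.sum_congr rfl fun k _ => by ring
  linarith

lemma sum_diag_aux {n : ℕ} (k : ℕ) (f : Fin n → ℂ) :
    (∑ l : Fin n, if k = (l:ℕ) then f l else 0) = if h : k < n then f ⟨k,h⟩ else 0 := by
  split
  · next h =>
    rw [Finset.sum_eq_single (⟨k, h⟩ : Fin n)]
    · simp
    · intro b _ hb
      rw [if_neg]
      intro hkb
      exact hb (by ext; simp [← hkb])
    · simp
  · next h =>
    refine Finset.sum_eq_zero fun l _ => ?_
    rw [if_neg]
    intro hkl
    exact h (hkl ▸ l.isLt)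

lemma aux_le {m n : ℕ} (f : Fin n → ℝ) (hf : ∀ l, 0 ≤ f l) :
    (∑ k : Fin m, if h : (k:ℕ) < n then f ⟨k,h⟩ else 0) ≤ ∑ l : Fin n, f l := by
  set F : ℕ → ℝ := fun k => if h : k < n then f ⟨k,h⟩ else 0 with hF
  have hL : (∑ k : Fin m, if h : (k:ℕ) < n then f ⟨k,h⟩ else 0) = ∑ k ∈ Finset.range m, F k :=
    Fin.sum_univ_eq_sum_range F m
  have hR : ∑ l : Fin n, f l = ∑ k ∈ Finset.range n, F k := by
    rw [← Fin.sum_univ_eq_sum_range F n]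
    exact Finset.sum_congr rfl fun l _ => by simp [hF]
  rw [hL, hR]
  rcases le_total m n with h | h
  · refine Finset.sum_le_sum_of_subset_of_nonneg (Finset.range_subset_range.mpr h) fun k _ _ => ?_
    by_cases hk : k < n <;> simp [hF, hk, hf]
  · refine le_of_eq (Finset.sum_subset (Finset.range_subset_range.mpr h) fun k _ hk => ?_).symm
    have : ¬ k < n := by simpa using hk
    simp [hF, this]

lemma cauchy_aux {r : ℕ} (x y : Fin r → ℂ) :
    ‖∑ i : Fin r, x i * starRingEnd ℂ (y i)‖ ≤
      Real.sqrt (∑ i : Fin r, ‖x i‖^2) * Real.sqrt (∑ i : Fin r, ‖y i‖^2) := by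
  let xv : EuclideanSpace ℂ (Fin r) := WithLp.toLp 2 x
  let yv : EuclideanSpace ℂ (Fin r) := WithLp.toLp 2 y
  have h := norm_inner_le_norm (𝕜 := ℂ) yv xv
  rw [EuclideanSpace.norm_eq, EuclideanSpace.norm_eq] at h
  have hinner : inner ℂ yv xv = ∑ i : Fin r, x i * starRingEnd ℂ (y i) := by
    rw [PiLp.inner_apply]
    exact Finset.sum_congr rfl fun i _ => by simp [xv, yv, RCLike.inner_apply, mul_comm]
  rw [hinner] at h
  calc ‖∑ i : Fin r, x i * starRingEnd ℂ (y i)‖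
      = ‖∑ i : Fin r, x i * starRingEnd ℂ (y i)‖ := rfl
    _ ≤ _ := by
        refine h.trans (le_of_eq (mul_comm _ _))

lemma col_bounds {r m : ℕ} (X : Matrix (Fin r) (Fin m) ℂ) (hX : X * Xᴴ = 1) :
    (∀ k, ∑ i : Fin r, ‖X i k‖^2 ≤ 1) ∧ ((∑ k : Fin m, ∑ i : Fin r, ‖X i k‖^2) = r) := by
  set M : Matrix (Fin m) (Fin m) ℂ := Xᴴ * X with hM
  have hMM : M * M = M := by
    have h1 : M * M = Xᴴ * (X * Xᴴ) * X := by simp only [hM, Matrix.mul_assoc]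
    rw [h1, hX, Matrix.mul_one]
  have hherm : ∀ k l, M l k = starRingEnd ℂ (M k l) := by
    intro k l
    have : Mᴴ = M := by simp [hM, conjTranspose_mul]
    conv_lhs => rw [← this]
    simp [Matrix.conjTranspose_apply]
  have hdiag : ∀ k, M k k = ((∑ i : Fin r, ‖X i k‖^2 : ℝ) : ℂ) := by
    intro k
    calc M k k = ∑ i : Fin r, starRingEnd ℂ (X i k) * X i k := by
          simp [hM, Matrix.mul_apply, Matrix.conjTranspose_apply]
      _ = ∑ i : Fin r, ((‖X i k‖^2 : ℝ) : ℂ) := by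
          refine Finset.sum_congr rfl fun i _ => ?_
          rw [mul_comm, Complex.mul_conj]
          norm_cast
          simp [Complex.normSq_eq_norm_sq]
      _ = _ := by push_cast; ring
  have hle1 : ∀ k, ∑ i : Fin r, ‖X i k‖^2 ≤ 1 := by
    intro k
    set t : ℝ := ∑ i : Fin r, ‖X i k‖^2 with ht
    have ht0 : 0 ≤ t := Finset.sum_nonneg fun i _ => sq_nonneg _
    have hsq : (t:ℂ) = ((∑ l : Fin m, Complex.normSq (M k l) : ℝ) : ℂ) := by
      calc (t:ℂ) = M k k := (hdiag k).symm
        _ = (M * M) k k := by rw [hMM]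
        _ = ∑ l : Fin m, M k l * starRingEnd ℂ (M k l) := by
            simp only [Matrix.mul_apply]
            exact Finset.sum_congr rfl fun l _ => by rw [← hherm k l]
        _ = _ := by push_cast; exact Finset.sum_congr rfl fun l _ => Complex.mul_conj _
    have hsq' : t = ∑ l : Fin m, Complex.normSq (M k l) := by exact_mod_cast hsq
    have hge : Complex.normSq (M k k) ≤ ∑ l : Fin m, Complex.normSq (M k l) :=
      Finset.single_le_sum (fun l _ => Complex.normSq_nonneg _) (Finset.mem_univ k)
    have hkk : Complex.normSq (M k k) = t^2 := by
      rw [hdiag k, Complex.normSq_ofReal]; ring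
    nlinarith
  refine ⟨hle1, ?_⟩
  have htr : M.trace = ((r : ℕ) : ℂ) := by
    rw [hM, Matrix.trace_mul_comm, hX, Matrix.trace_one]
    simp
  have h2 : M.trace = ((∑ k : Fin m, ∑ i : Fin r, ‖X i k‖^2 : ℝ) : ℂ) := by
    have : M.trace = ∑ k : Fin m, M k k := rfl
    rw [this, Finset.sum_congr rfl fun k _ => hdiag k]
    norm_cast
  rw [h2] at htr
  exact_mod_cast htr

lemma trace_formula {m n r : ℕ} (σ : ℕ → ℝ) (X : Matrix (Fin r) (Fin m) ℂ)
    (Y : Matrix (Fin r) (Fin n) ℂ) :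
    (X * (Matrix.of fun (i : Fin m) (j : Fin n) =>
        if (i:ℕ) = (j:ℕ) then (σ (i:ℕ):ℂ) else 0) * Yᴴ).trace
    = ∑ k : Fin m, if h : (k:ℕ) < n then
        (σ (k:ℕ) : ℂ) * ∑ i : Fin r, X i k * starRingEnd ℂ (Y i ⟨(k:ℕ),h⟩) else 0 := by
  have step1 : (X * (Matrix.of fun (i : Fin m) (j : Fin n) =>
        if (i:ℕ) = (j:ℕ) then (σ (i:ℕ):ℂ) else 0) * Yᴴ).trace
      = ∑ i : Fin r, ∑ k : Fin m, ∑ l : Fin n,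
          (if (k:ℕ) = (l:ℕ) then (σ (k:ℕ):ℂ) * (X i k * starRingEnd ℂ (Y i l)) else 0) := by
    simp only [Matrix.trace, Matrix.diag_apply, Matrix.mul_apply, Matrix.conjTranspose_apply,
      Matrix.of_apply, Finset.sum_mul, mul_ite, ite_mul, mul_zero, zero_mul]
    refine Finset.sum_congr rfl fun i _ => ?_
    rw [Finset.sum_comm]
    refine Finset.sum_congr rfl fun k _ => Finset.sum_congr rfl fun l _ => ?_
    split_ifs with h
    · simp only [starRingEnd_apply]; ring
    · rfl
  rw [step1, Finset.sum_comm]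
  refine Finset.sum_congr rfl fun k _ => ?_
  have hinner : ∀ i : Fin r, (∑ l : Fin n, if (k:ℕ) = (l:ℕ) then
        (σ (k:ℕ):ℂ) * (X i k * starRingEnd ℂ (Y i l)) else 0)
      = if h : (k:ℕ) < n then (σ (k:ℕ):ℂ) * (X i k * starRingEnd ℂ (Y i ⟨(k:ℕ),h⟩)) else 0 :=
    fun i => sum_diag_aux (k:ℕ) _
  rw [Finset.sum_congr rfl fun i _ => hinner i]
  split
  · next h =>
    rw [Finset.mul_sum]
  · simp


lemma sqrt_mul_le_half {x y : ℝ} (hx : 0 ≤ x) (hy : 0 ≤ y) :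
    Real.sqrt x * Real.sqrt y ≤ (x + y)/2 := by
  nlinarith [Real.sq_sqrt hx, Real.sq_sqrt hy, sq_nonneg (Real.sqrt x - Real.sqrt y),
    Real.sqrt_nonneg x, Real.sqrt_nonneg y]

set_option maxHeartbeats 1600000 in
theorem truncated_trace_max_attained {m n r : ℕ}
    (A : Matrix (Fin m) (Fin n) ℂ)
    (U : Matrix (Fin m) (Fin m) ℂ) (V : Matrix (Fin n) (Fin n) ℂ) (σ : ℕ → ℝ)
    (hU : Uᴴ * U = 1 ∧ U * Uᴴ = 1)
    (hV : Vᴴ * V = 1 ∧ V * Vᴴ = 1)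
    (hσ0 : ∀ k, 0 ≤ σ k) (hσa : Antitone σ)
    (hA : A = U * Matrix.of (fun (i : Fin m) (j : Fin n) =>
      if (i : ℕ) = (j : ℕ) then (σ (i : ℕ) : ℂ) else 0) * Vᴴ)
    (hr : r ≤ min m n) :
    IsGreatest
      {t : ℝ | ∃ (P : Matrix (Fin r) (Fin m) ℂ) (Q : Matrix (Fin r) (Fin n) ℂ),
        P * Pᴴ = 1 ∧ Q * Qᴴ = 1 ∧ t = ‖(P * A * Qᴴ).trace‖}
      (∑ i : Fin r, σ (i : ℕ)) ∧
    ‖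
      ((Matrix.of (fun (i : Fin r) (k : Fin m) =>
          starRingEnd ℂ (U k (Fin.castLE (hr.trans (min_le_left m n)) i))) * A *
        (Matrix.of (fun (i : Fin r) (k : Fin n) =>
          starRingEnd ℂ (V k (Fin.castLE (hr.trans (min_le_right m n)) i))))ᴴ).trace)‖ =
      ∑ i : Fin r, σ (i : ℕ) := by
  have h1 : r ≤ m := hr.trans (min_le_left m n)
  have h2 : r ≤ n := hr.trans (min_le_right m n)
  set S : Matrix (Fin m) (Fin n) ℂ := Matrix.of (fun (i : Fin m) (j : Fin n) =>
      if (i : ℕ) = (j : ℕ) then (σ (i : ℕ) : ℂ) else 0) with hS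
  set e : Fin r → Fin m := Fin.castLE h1 with he
  set f : Fin r → Fin n := Fin.castLE h2 with hf
  set P₀ : Matrix (Fin r) (Fin m) ℂ :=
    Matrix.of (fun (i : Fin r) (k : Fin m) =>
      starRingEnd ℂ (U k (Fin.castLE (hr.trans (min_le_left m n)) i))) with hP₀
  set Q₀ : Matrix (Fin r) (Fin n) ℂ :=
    Matrix.of (fun (i : Fin r) (k : Fin n) =>
      starRingEnd ℂ (V k (Fin.castLE (hr.trans (min_le_right m n)) i))) with hQ₀
  have hP0eq : P₀ = (Uᴴ).submatrix e id := by
    ext i k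
    rfl
  have hQ0eq : Q₀ = (Vᴴ).submatrix f id := by
    ext i k
    rfl
  have hP0P0 : P₀ * P₀ᴴ = 1 := by
    rw [hP0eq, Matrix.conjTranspose_submatrix, Matrix.conjTranspose_conjTranspose,
      ← Matrix.submatrix_mul Uᴴ U e id e Function.bijective_id, hU.1]
    exact Matrix.submatrix_one e (Fin.castLE_injective h1)
  have hQ0Q0 : Q₀ * Q₀ᴴ = 1 := by
    rw [hQ0eq, Matrix.conjTranspose_submatrix, Matrix.conjTranspose_conjTranspose,
      ← Matrix.submatrix_mul Vᴴ V f id f Function.bijective_id, hV.1]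
    exact Matrix.submatrix_one f (Fin.castLE_injective h2)
  have hprod : P₀ * A * Q₀ᴴ = S.submatrix e f := by
    rw [hA, hP0eq, hQ0eq, Matrix.conjTranspose_submatrix, Matrix.conjTranspose_conjTranspose]
    have step1 : (Uᴴ).submatrix e id * (U * S * Vᴴ) = (S * Vᴴ).submatrix e id := by
      have h := Matrix.submatrix_mul Uᴴ (U * S * Vᴴ) e id id Function.bijective_id
      rw [Matrix.submatrix_id_id] at h
      rw [← h]
      have : Uᴴ * (U * S * Vᴴ) = (Uᴴ * U) * (S * Vᴴ) := by
        simp only [Matrix.mul_assoc]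
      rw [this, hU.1, Matrix.one_mul]
    have step2 : (S * Vᴴ).submatrix e id * V.submatrix id f = S.submatrix e f := by
      have h := Matrix.submatrix_mul (S * Vᴴ) V e id f Function.bijective_id
      rw [← h]
      have : S * Vᴴ * V = S * (Vᴴ * V) := by simp only [Matrix.mul_assoc]
      rw [this, hV.1, Matrix.mul_one]
    rw [step1, step2]
  have hval : (P₀ * A * Q₀ᴴ).trace = ((∑ i : Fin r, σ (i : ℕ) : ℝ) : ℂ) := by
    rw [hprod]
    have : (S.submatrix e f).trace = ∑ i : Fin r, S (e i) (f i) := rfl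
    rw [this]
    have : ∀ i : Fin r, S (e i) (f i) = ((σ (i:ℕ) : ℝ) : ℂ) := by
      intro i
      simp [hS, he, hf]
    rw [Finset.sum_congr rfl fun i _ => this i]
    norm_cast
  have habs : ‖(P₀ * A * Q₀ᴴ).trace‖ = ∑ i : Fin r, σ (i : ℕ) := by
    rw [hval, Complex.norm_real, Real.norm_eq_abs, abs_of_nonneg (Finset.sum_nonneg fun i _ => hσ0 _)]
  refine ⟨⟨⟨P₀, Q₀, hP0P0, hQ0Q0, habs.symm⟩, ?_⟩, habs⟩
  rintro t ⟨P, Q, hP, hQ, rfl⟩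
  set X := P * U with hX
  set Y := Q * V with hY
  have hXX : X * Xᴴ = 1 := by
    rw [hX, Matrix.conjTranspose_mul]
    have : P * U * (Uᴴ * Pᴴ) = P * (U * Uᴴ) * Pᴴ := by simp only [Matrix.mul_assoc]
    rw [this, hU.2, Matrix.mul_one, hP]
  have hYY : Y * Yᴴ = 1 := by
    rw [hY, Matrix.conjTranspose_mul]
    have : Q * V * (Vᴴ * Qᴴ) = Q * (V * Vᴴ) * Qᴴ := by simp only [Matrix.mul_assoc]
    rw [this, hV.2, Matrix.mul_one, hQ]
  have htr : P * A * Qᴴ = X * S * Yᴴ := by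
    rw [hA, hX, hY, Matrix.conjTranspose_mul]
    simp only [Matrix.mul_assoc]
  obtain ⟨hX1, hXsum⟩ := col_bounds X hXX
  obtain ⟨hY1, hYsum⟩ := col_bounds Y hYY
  set d : ℕ → ℝ := fun k =>
    if hk : k < m then
      (if hn : k < n then
        ‖∑ i : Fin r, X i ⟨k, hk⟩ * starRingEnd ℂ (Y i ⟨k, hn⟩)‖ else 0)
    else 0 with hd
  have hd0 : ∀ k, 0 ≤ d k := by
    intro k
    rw [hd]
    dsimp only
    split
    · split
      · exact norm_nonneg _
      · exact le_refl 0
    · exact le_refl 0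
  have hd1 : ∀ k, d k ≤ 1 := by
    intro k
    rw [hd]
    dsimp only
    split
    · next hk =>
      split
      · next hn =>
        refine (cauchy_aux _ _).trans ?_
        have ha := hX1 ⟨k, hk⟩
        have hb := hY1 ⟨k, hn⟩
        have hb0 : (0:ℝ) ≤ ∑ i : Fin r, ‖Y i ⟨k, hn⟩‖^2 :=
          Finset.sum_nonneg fun i _ => sq_nonneg _
        exact mul_le_one₀ (Real.sqrt_le_one.mpr ha) (Real.sqrt_nonneg _)
          (Real.sqrt_le_one.mpr hb)
      · exact zero_le_one
    · exact zero_le_one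
  have hdk : ∀ k : Fin m, d (k:ℕ) ≤ ((∑ i : Fin r, ‖X i k‖^2) +
      (if h : (k:ℕ) < n then ∑ i : Fin r, ‖Y i ⟨(k:ℕ), h⟩‖^2 else 0))/2 := by
    intro k
    rw [hd]
    dsimp only
    rw [dif_pos k.isLt]
    by_cases hn : (k:ℕ) < n
    · rw [dif_pos hn, dif_pos hn]
      have ha0 : (0:ℝ) ≤ ∑ i : Fin r, ‖X i ⟨(k:ℕ), k.isLt⟩‖^2 :=
        Finset.sum_nonneg fun i _ => sq_nonneg _
      have hb0 : (0:ℝ) ≤ ∑ i : Fin r, ‖Y i ⟨(k:ℕ), hn⟩‖^2 :=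
        Finset.sum_nonneg fun i _ => sq_nonneg _
      exact (cauchy_aux _ _).trans (sqrt_mul_le_half ha0 hb0)
    · rw [dif_neg hn, dif_neg hn]
      have ha0 : (0:ℝ) ≤ ∑ i : Fin r, ‖X i k‖^2 :=
        Finset.sum_nonneg fun i _ => sq_nonneg _
      linarith
  have hdsum : ∑ k ∈ Finset.range m, d k ≤ (r:ℝ) := by
    rw [← Fin.sum_univ_eq_sum_range d m]
    have hb := aux_le (m := m) (fun l : Fin n => ∑ i : Fin r, ‖Y i l‖^2)
      (fun l => Finset.sum_nonneg fun i _ => sq_nonneg _)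
    calc ∑ k : Fin m, d (k:ℕ)
        ≤ ∑ k : Fin m, (((∑ i : Fin r, ‖X i k‖^2) +
            (if h : (k:ℕ) < n then ∑ i : Fin r, ‖Y i ⟨(k:ℕ), h⟩‖^2 else 0))/2) :=
          Finset.sum_le_sum fun k _ => hdk k
      _ = ((∑ k : Fin m, ∑ i : Fin r, ‖X i k‖^2) +
            ∑ k : Fin m, (if h : (k:ℕ) < n then ∑ i : Fin r, ‖Y i ⟨(k:ℕ), h⟩‖^2 else 0))/2 := by
          rw [← Finset.sum_add_distrib, Finset.sum_div]
      _ ≤ ((r:ℝ) + (r:ℝ))/2 := by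
          rw [hXsum]
          rw [hYsum] at hb
          linarith
      _ = (r:ℝ) := by ring
  rw [htr, trace_formula σ X Y]
  refine le_trans (norm_sum_le _ _) ?_
  have hpt : ∀ k : Fin m, ‖(if h : (k:ℕ) < n then
      (σ (k:ℕ) : ℂ) * ∑ i : Fin r, X i k * starRingEnd ℂ (Y i ⟨(k:ℕ), h⟩) else 0)‖
      = σ (k:ℕ) * d (k:ℕ) := by
    intro k
    rw [hd]
    dsimp only
    rw [dif_pos k.isLt]
    by_cases h : (k:ℕ) < n
    · rw [dif_pos h, dif_pos h, norm_mul, Complex.norm_real, Real.norm_eq_abs,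
        abs_of_nonneg (hσ0 _)]
    · rw [dif_neg h, dif_neg h]
      simp
  calc ∑ k : Fin m, ‖(if h : (k:ℕ) < n then
        (σ (k:ℕ) : ℂ) * ∑ i : Fin r, X i k * starRingEnd ℂ (Y i ⟨(k:ℕ), h⟩) else 0)‖
      = ∑ k : Fin m, σ (k:ℕ) * d (k:ℕ) := Finset.sum_congr rfl fun k _ => hpt k
    _ = ∑ k ∈ Finset.range m, σ k * d k := Fin.sum_univ_eq_sum_range (fun k => σ k * d k) m
    _ ≤ ∑ i ∈ Finset.range r, σ i := key_bound m r h1 σ hσ0 hσa d hd0 hd1 hdsum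
    _ = ∑ i : Fin r, σ (i:ℕ) := (Fin.sum_univ_eq_sum_range σ r).symm
end

section
/- For any complex m×n matrix A and any integer r with 0 ≤ r ≤ min(m,n), the truncated nuclear norm ‖A‖_r := Σ_{i=r+1}^{min(m,n)} σ_i(A) equals ‖A‖_* − max{|trace(P A Qᴴ)| : P Pᴴ = I_r, Q Qᴴ = I_r}, where ‖A‖_* is the nuclear norm (sum of all singular values). -/
open Matrix

section TnnAux

open Complex Finset

lemma tnn_rearrange (σ t : ℕ → ℝ) (N r : ℕ) (hr : r ≤ N) (hσ0 : ∀ k, 0 ≤ σ k)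
    (hσa : Antitone σ) (ht0 : ∀ l, 0 ≤ t l) (ht1 : ∀ l, t l ≤ 1)
    (hts : ∑ l ∈ Finset.range N, t l ≤ r) :
    ∑ l ∈ Finset.range N, σ l * t l ≤ ∑ l ∈ Finset.range r, σ l := by
  have split : ∑ l ∈ Finset.range N, σ l * t l =
      ∑ l ∈ Finset.range r, σ l * t l + ∑ l ∈ Finset.Ico r N, σ l * t l :=
    (Finset.sum_range_add_sum_Ico _ hr).symm
  have splitT : ∑ l ∈ Finset.range N, t l =
      ∑ l ∈ Finset.range r, t l + ∑ l ∈ Finset.Ico r N, t l :=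
    (Finset.sum_range_add_sum_Ico _ hr).symm
  have h1 : ∑ l ∈ Finset.range r, (σ l * t l - σ l)
      ≤ ∑ l ∈ Finset.range r, σ r * (t l - 1) := by
    apply Finset.sum_le_sum
    intro i hi
    have h2 : σ r ≤ σ i := hσa (Finset.mem_range.mp hi).le
    nlinarith [ht1 i, hσ0 r]
  have h3 : ∑ l ∈ Finset.Ico r N, σ l * t l ≤ ∑ l ∈ Finset.Ico r N, σ r * t l := by
    apply Finset.sum_le_sum
    intro i hi
    exact mul_le_mul_of_nonneg_right (hσa (Finset.mem_Ico.mp hi).1) (ht0 i)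
  have h4 : ∑ l ∈ Finset.range r, σ r * (t l - 1) + ∑ l ∈ Finset.Ico r N, σ r * t l
      = σ r * (∑ l ∈ Finset.range N, t l - r) := by
    rw [splitT]
    simp only [mul_sub, mul_one]
    rw [Finset.sum_sub_distrib, Finset.sum_const, Finset.card_range, ← Finset.mul_sum,
      ← Finset.mul_sum, nsmul_eq_mul]
    ring
  have h5 : σ r * (∑ l ∈ Finset.range N, t l - r) ≤ 0 :=
    mul_nonpos_of_nonneg_of_nonpos (hσ0 r) (by linarith)
  have h6 := Finset.sum_sub_distrib (f := fun l => σ l * t l) (g := σ) (s := Finset.range r)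
  linarith [h1, h3, h4, h5, split, h6]

lemma tnn_inner_collapse {m n : ℕ} (f : Fin m → Fin n → ℂ) (j : Fin m) :
    ∑ k : Fin n, (if (j : ℕ) = (k : ℕ) then f j k else 0)
      = if h : (j : ℕ) < n then f j ⟨j, h⟩ else 0 := by
  by_cases h : (j : ℕ) < n
  · rw [dif_pos h]
    rw [Finset.sum_eq_single (⟨(j : ℕ), h⟩ : Fin n)]
    · simp
    · intro k _ hk
      rw [if_neg]
      intro hjk
      exact hk (Fin.ext (a := k) (b := ⟨(j:ℕ), h⟩) hjk.symm)
    · simp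
  · rw [dif_neg h]
    apply Finset.sum_eq_zero
    intro k _
    rw [if_neg]
    intro hjk
    exact h (hjk ▸ k.2)

lemma tnn_diag_collapse {m n : ℕ} (f : Fin m → Fin n → ℂ) :
    ∑ j : Fin m, ∑ k : Fin n, (if (j : ℕ) = (k : ℕ) then f j k else 0)
      = ∑ l : Fin (min m n), f (Fin.castLE (min_le_left m n) l) (Fin.castLE (min_le_right m n) l) := by
  set F : ℕ → ℂ := fun l => if h : l < m ∧ l < n then f ⟨l, h.1⟩ ⟨l, h.2⟩ else 0 with hF
  have h1 : ∑ j : Fin m, ∑ k : Fin n, (if (j : ℕ) = (k : ℕ) then f j k else 0)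
      = ∑ j : Fin m, F (j : ℕ) := by
    apply Finset.sum_congr rfl
    intro j _
    rw [tnn_inner_collapse]
    by_cases h : (j : ℕ) < n
    · rw [dif_pos h, hF]
      simp only [j.2, h, and_self, dif_pos]
    · rw [dif_neg h, hF]
      simp [h]
  have h2 : ∑ l : Fin (min m n), f (Fin.castLE (min_le_left m n) l) (Fin.castLE (min_le_right m n) l)
      = ∑ l : Fin (min m n), F (l : ℕ) := by
    apply Finset.sum_congr rfl
    intro l _
    have h : (l : ℕ) < m ∧ (l : ℕ) < n :=
      ⟨lt_of_lt_of_le l.2 (min_le_left m n), lt_of_lt_of_le l.2 (min_le_right m n)⟩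
    rw [hF]
    simp only [h, dif_pos]
    rfl
  rw [h1, h2, Fin.sum_univ_eq_sum_range F m, Fin.sum_univ_eq_sum_range F (min m n)]
  symm
  apply Finset.sum_subset (Finset.range_subset_range.2 (min_le_left m n))
  intro x hx hx'
  rw [hF]
  have : ¬ (x < m ∧ x < n) := by
    intro hc
    exact hx' (Finset.mem_range.2 (lt_min hc.1 hc.2))
  simp [this]

lemma tnn_trace_formula {r m n : ℕ} (σ : ℕ → ℝ)
    (B : Matrix (Fin r) (Fin m) ℂ) (C : Matrix (Fin r) (Fin n) ℂ) :
    (B * (Matrix.of fun (i : Fin m) (j : Fin n) =>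
        if (i : ℕ) = (j : ℕ) then (σ (i : ℕ) : ℂ) else 0) * Cᴴ).trace
      = ∑ l : Fin (min m n), (σ (l : ℕ) : ℂ) *
          ∑ i : Fin r, B i (Fin.castLE (min_le_left m n) l) *
            (starRingEnd ℂ) (C i (Fin.castLE (min_le_right m n) l)) := by
  rw [Matrix.trace]
  simp only [Matrix.diag_apply, Matrix.mul_apply, Matrix.conjTranspose_apply, Matrix.of_apply]
  have step : ∀ i : Fin r, ∑ k : Fin n,
        (∑ j : Fin m, B i j * (if (j : ℕ) = (k : ℕ) then (σ (j : ℕ) : ℂ) else 0)) *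
          (starRingEnd ℂ) (C i k)
      = ∑ j : Fin m, ∑ k : Fin n,
          (if (j : ℕ) = (k : ℕ) then (σ (j : ℕ) : ℂ) * (B i j * (starRingEnd ℂ) (C i k)) else 0) := by
    intro i
    rw [Finset.sum_comm]
    apply Finset.sum_congr rfl
    intro j _
    rw [Finset.sum_mul]
    apply Finset.sum_congr rfl
    intro x _
    split_ifs with h
    · ring
    · simp
  calc ∑ i : Fin r, ∑ k : Fin n,
        (∑ j : Fin m, B i j * (if (j : ℕ) = (k : ℕ) then (σ (j : ℕ) : ℂ) else 0)) *
          (starRingEnd ℂ) (C i k)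
      = ∑ i : Fin r, ∑ j : Fin m, ∑ k : Fin n,
          (if (j : ℕ) = (k : ℕ) then (σ (j : ℕ) : ℂ) * (B i j * (starRingEnd ℂ) (C i k)) else 0) :=
        Finset.sum_congr rfl (fun i _ => step i)
    _ = ∑ j : Fin m, ∑ k : Fin n, ∑ i : Fin r,
          (if (j : ℕ) = (k : ℕ) then (σ (j : ℕ) : ℂ) * (B i j * (starRingEnd ℂ) (C i k)) else 0) := by
        rw [Finset.sum_comm]
        exact Finset.sum_congr rfl (fun j _ => Finset.sum_comm)
    _ = ∑ j : Fin m, ∑ k : Fin n,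
          (if (j : ℕ) = (k : ℕ) then (σ (j : ℕ) : ℂ) *
            ∑ i : Fin r, B i j * (starRingEnd ℂ) (C i k) else 0) := by
        apply Finset.sum_congr rfl; intro j _
        apply Finset.sum_congr rfl; intro k _
        split_ifs with h
        · rw [Finset.mul_sum]
        · simp
    _ = _ := by
        rw [tnn_diag_collapse (fun j k => (σ (j : ℕ) : ℂ) * ∑ i : Fin r, B i j * (starRingEnd ℂ) (C i k))]
        rfl

lemma tnn_row_norm {r m : ℕ} (B : Matrix (Fin r) (Fin m) ℂ) (hB : B * Bᴴ = 1) (i : Fin r) :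
    ∑ j : Fin m, Complex.normSq (B i j) = 1 := by
  have h := congrFun (congrFun hB i) i
  rw [Matrix.mul_apply] at h
  simp only [Matrix.conjTranspose_apply, Matrix.one_apply_eq, RCLike.star_def] at h
  have h2 : ∑ j : Fin m, B i j * (starRingEnd ℂ) (B i j)
      = ((∑ j : Fin m, Complex.normSq (B i j) : ℝ) : ℂ) := by
    push_cast
    exact Finset.sum_congr rfl fun j _ => (Complex.mul_conj (B i j))
  rw [h2] at h
  exact_mod_cast h

lemma tnn_frobenius {r m : ℕ} (B : Matrix (Fin r) (Fin m) ℂ) (hB : B * Bᴴ = 1) :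
    ∑ j : Fin m, ∑ i : Fin r, Complex.normSq (B i j) = r := by
  rw [Finset.sum_comm]
  have : ∀ i : Fin r, ∑ j : Fin m, Complex.normSq (B i j) = 1 := tnn_row_norm B hB
  simp [this]

lemma tnn_col_norm {r m : ℕ} (B : Matrix (Fin r) (Fin m) ℂ) (hB : B * Bᴴ = 1) (j : Fin m) :
    ∑ i : Fin r, Complex.normSq (B i j) ≤ 1 := by
  set G := Bᴴ * B with hG
  have hGG : G * G = G := by
    rw [hG, Matrix.mul_assoc, ← Matrix.mul_assoc B, hB, Matrix.one_mul]
  have hGH : Gᴴ = G := by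
    rw [hG, Matrix.conjTranspose_mul, Matrix.conjTranspose_conjTranspose]
  set b : ℝ := ∑ i : Fin r, Complex.normSq (B i j) with hb
  have hGjj : G j j = (b : ℂ) := by
    rw [hG, Matrix.mul_apply]
    simp only [Matrix.conjTranspose_apply]
    push_cast [hb]
    apply Finset.sum_congr rfl
    intro i _
    rw [RCLike.star_def, mul_comm, Complex.mul_conj]
  have hGsym : ∀ k, G k j = (starRingEnd ℂ) (G j k) := by
    intro k
    conv_lhs => rw [← hGH]
    rfl
  have e1 : (G * G) j j = ((∑ k : Fin m, Complex.normSq (G j k) : ℝ) : ℂ) := by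
    rw [Matrix.mul_apply]
    push_cast
    apply Finset.sum_congr rfl
    intro k _
    rw [hGsym k, Complex.mul_conj]
  have e2 : (G * G) j j = (b : ℂ) := by rw [hGG, hGjj]
  have key2 : b = ∑ k : Fin m, Complex.normSq (G j k) := by
    have := e2.symm.trans e1
    exact_mod_cast this
  have hle : Complex.normSq (G j j) ≤ b := by
    rw [key2]
    exact Finset.single_le_sum (fun k _ => Complex.normSq_nonneg _) (Finset.mem_univ j)
  rw [hGjj] at hle
  simp only [Complex.normSq_ofReal] at hle
  have hb0 : 0 ≤ b := Finset.sum_nonneg fun i _ => Complex.normSq_nonneg _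
  nlinarith

end TnnAux

theorem truncated_nuclear_norm_eq {m n r : ℕ}
    (A : Matrix (Fin m) (Fin n) ℂ)
    (U : Matrix (Fin m) (Fin m) ℂ) (V : Matrix (Fin n) (Fin n) ℂ) (σ : ℕ → ℝ)
    (hU : Uᴴ * U = 1 ∧ U * Uᴴ = 1)
    (hV : Vᴴ * V = 1 ∧ V * Vᴴ = 1)
    (hσ0 : ∀ k, 0 ≤ σ k) (hσa : Antitone σ)
    (hA : A = U * Matrix.of (fun (i : Fin m) (j : Fin n) =>
      if (i : ℕ) = (j : ℕ) then (σ (i : ℕ) : ℂ) else 0) * Vᴴ)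
    (hr : r ≤ min m n) :
    ∃ M : ℝ,
      IsGreatest
        {t : ℝ | ∃ (P : Matrix (Fin r) (Fin m) ℂ) (Q : Matrix (Fin r) (Fin n) ℂ),
          P * Pᴴ = 1 ∧ Q * Qᴴ = 1 ∧ t = ‖(P * A * Qᴴ).trace‖} M ∧
      ∑ i ∈ Finset.Ico r (min m n), σ i = (∑ i ∈ Finset.range (min m n), σ i) - M := by
  set N := min m n with hN
  set S : Matrix (Fin m) (Fin n) ℂ := Matrix.of (fun (i : Fin m) (j : Fin n) =>
      if (i : ℕ) = (j : ℕ) then (σ (i : ℕ) : ℂ) else 0) with hS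
  have hrm : r ≤ m := hr.trans (min_le_left m n)
  have hrn : r ≤ n := hr.trans (min_le_right m n)
  set M : ℝ := ∑ i ∈ Finset.range r, σ i with hM
  have hM0 : 0 ≤ M := Finset.sum_nonneg fun i _ => hσ0 i
  refine ⟨M, ⟨⟨?_, ?_⟩, ?_⟩⟩
  · -- membership
    set fm : Fin r → Fin m := Fin.castLE hrm with hfm
    set fn : Fin r → Fin n := Fin.castLE hrn with hfn
    refine ⟨Uᴴ.submatrix fm id, Vᴴ.submatrix fn id, ?_, ?_, ?_⟩
    · rw [Matrix.conjTranspose_submatrix, Matrix.conjTranspose_conjTranspose,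
        ← Matrix.submatrix_mul _ _ fm id fm Function.bijective_id, hU.1,
        Matrix.submatrix_one fm (Fin.castLE_injective hrm)]
    · rw [Matrix.conjTranspose_submatrix, Matrix.conjTranspose_conjTranspose,
        ← Matrix.submatrix_mul _ _ fn id fn Function.bijective_id, hV.1,
        Matrix.submatrix_one fn (Fin.castLE_injective hrn)]
    · set B : Matrix (Fin r) (Fin m) ℂ := (Uᴴ.submatrix fm id) * U with hB
      set C : Matrix (Fin r) (Fin n) ℂ := (Vᴴ.submatrix fn id) * V with hC
      have hre : (Uᴴ.submatrix fm id) * A * (Vᴴ.submatrix fn id)ᴴ = B * S * Cᴴ := by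
        rw [hA, hB, hC]
        simp only [Matrix.conjTranspose_mul, Matrix.conjTranspose_submatrix,
          Matrix.conjTranspose_conjTranspose, Matrix.mul_assoc]
      rw [hre, tnn_trace_formula]
      have hBe : ∀ (i : Fin r) (j : Fin m), B i j = if (i : ℕ) = (j : ℕ) then 1 else 0 := by
        intro i j
        rw [hB, Matrix.mul_apply]
        have h1 : ∑ k : Fin m, Uᴴ.submatrix fm id i k * U k j = (Uᴴ * U) (fm i) j := by
          rw [Matrix.mul_apply]; rfl
        rw [h1, hU.1, Matrix.one_apply]
        congr 1
        simp [hfm, Fin.ext_iff, eq_comm]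
      have hCe : ∀ (i : Fin r) (j : Fin n), C i j = if (i : ℕ) = (j : ℕ) then 1 else 0 := by
        intro i j
        rw [hC, Matrix.mul_apply]
        have h1 : ∑ k : Fin n, Vᴴ.submatrix fn id i k * V k j = (Vᴴ * V) (fn i) j := by
          rw [Matrix.mul_apply]; rfl
        rw [h1, hV.1, Matrix.one_apply]
        congr 1
        simp [hfn, Fin.ext_iff, eq_comm]
      have hcl : ∀ l : Fin N, ∑ i : Fin r,
            B i (Fin.castLE (min_le_left m n) l) *
              (starRingEnd ℂ) (C i (Fin.castLE (min_le_right m n) l))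
          = if (l : ℕ) < r then 1 else 0 := by
        intro l
        have : ∀ i : Fin r, B i (Fin.castLE (min_le_left m n) l) *
              (starRingEnd ℂ) (C i (Fin.castLE (min_le_right m n) l))
            = if (l : ℕ) = (i : ℕ) then (1 : ℂ) else 0 := by
          intro i
          rw [hBe, hCe]
          simp only [Fin.coe_castLE]
          by_cases h : (i : ℕ) = (l : ℕ)
          · simp [h]
          · rw [if_neg h, zero_mul, if_neg (fun hh => h hh.symm)]
        rw [Finset.sum_congr rfl (fun i _ => this i)]
        rw [tnn_inner_collapse (fun _ _ => (1 : ℂ)) l]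
        by_cases h : (l : ℕ) < r
        · rw [dif_pos h, if_pos h]
        · rw [dif_neg h, if_neg h]
      have htr : ∑ l : Fin N, (σ (l : ℕ) : ℂ) *
            ∑ i : Fin r, B i (Fin.castLE (min_le_left m n) l) *
              (starRingEnd ℂ) (C i (Fin.castLE (min_le_right m n) l))
          = ((M : ℝ) : ℂ) := by
        rw [Finset.sum_congr rfl (fun l _ => by rw [hcl l])]
        have step1 : ∑ l : Fin N, (σ (l : ℕ) : ℂ) * (if (l : ℕ) < r then (1:ℂ) else 0)
            = ∑ l ∈ Finset.range N, (if l < r then ((σ l : ℂ)) else 0) := by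
          rw [← Fin.sum_univ_eq_sum_range (fun l => if l < r then ((σ l : ℂ)) else 0) N]
          apply Finset.sum_congr rfl
          intro l _
          split_ifs with h
          · ring
          · ring
        rw [step1]
        have step2 : ∑ l ∈ Finset.range N, (if l < r then ((σ l : ℂ)) else 0)
            = ∑ l ∈ Finset.range r, ((σ l : ℂ)) := by
          rw [← Finset.sum_subset (Finset.range_subset_range.2 hr)
            (fun x _ hx => if_neg (fun hc => hx (Finset.mem_range.2 hc)))]
          exact Finset.sum_congr rfl fun x hx => if_pos (Finset.mem_range.mp hx)
        rw [step2, hM]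
        push_cast
        rfl
      rw [htr]
      rw [Complex.norm_real, Real.norm_of_nonneg hM0]
  · -- upper bound
    rintro t ⟨P, Q, hP, hQ, rfl⟩
    set B : Matrix (Fin r) (Fin m) ℂ := P * U with hB
    set C : Matrix (Fin r) (Fin n) ℂ := Q * V with hC
    have hBB : B * Bᴴ = 1 := by
      rw [hB, Matrix.conjTranspose_mul, Matrix.mul_assoc, ← Matrix.mul_assoc U, hU.2,
        Matrix.one_mul, hP]
    have hCC : C * Cᴴ = 1 := by
      rw [hC, Matrix.conjTranspose_mul, Matrix.mul_assoc, ← Matrix.mul_assoc V, hV.2,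
        Matrix.one_mul, hQ]
    have hre : P * A * Qᴴ = B * S * Cᴴ := by
      rw [hA, hB, hC]
      simp only [Matrix.conjTranspose_mul, Matrix.mul_assoc]
    rw [hre, tnn_trace_formula]
    set fm : Fin N → Fin m := Fin.castLE (min_le_left m n) with hfm
    set fn : Fin N → Fin n := Fin.castLE (min_le_right m n) with hfn
    set t' : ℕ → ℝ := fun l => if h : l < N then
        ((∑ i : Fin r, Complex.normSq (B i (fm ⟨l, h⟩)))
          + ∑ i : Fin r, Complex.normSq (C i (fn ⟨l, h⟩))) / 2 else 0 with ht'
    have ht'0 : ∀ l, 0 ≤ t' l := by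
      intro l
      rw [ht']
      dsimp only
      split_ifs with h
      · have := Finset.sum_nonneg (fun i (_ : i ∈ Finset.univ) => Complex.normSq_nonneg (B i (fm ⟨l, h⟩)))
        have := Finset.sum_nonneg (fun i (_ : i ∈ Finset.univ) => Complex.normSq_nonneg (C i (fn ⟨l, h⟩)))
        linarith
      · exact le_refl 0
    have ht'1 : ∀ l, t' l ≤ 1 := by
      intro l
      rw [ht']
      dsimp only
      split_ifs with h
      · have h1 := tnn_col_norm B hBB (fm ⟨l, h⟩)
        have h2 := tnn_col_norm C hCC (fn ⟨l, h⟩)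
        linarith
      · linarith
    have heta : ∀ l : Fin N, t' (l : ℕ) =
        ((∑ i : Fin r, Complex.normSq (B i (fm l)))
          + ∑ i : Fin r, Complex.normSq (C i (fn l))) / 2 := by
      intro l
      rw [ht']
      dsimp only
      rw [dif_pos l.2]
    have hsum : ∑ l ∈ Finset.range N, t' l ≤ r := by
      rw [← Fin.sum_univ_eq_sum_range t' N]
      rw [Finset.sum_congr rfl (fun l _ => heta l)]
      rw [← Finset.sum_div, Finset.sum_add_distrib]
      have hbB : ∑ l : Fin N, ∑ i : Fin r, Complex.normSq (B i (fm l)) ≤ (r : ℝ) := by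
        have hinj : Function.Injective fm := Fin.castLE_injective _
        calc ∑ l : Fin N, ∑ i : Fin r, Complex.normSq (B i (fm l))
            = ∑ j ∈ Finset.univ.image fm, ∑ i : Fin r, Complex.normSq (B i j) := by
              rw [Finset.sum_image (fun x _ y _ h => hinj h)]
          _ ≤ ∑ j : Fin m, ∑ i : Fin r, Complex.normSq (B i j) :=
              Finset.sum_le_sum_of_subset_of_nonneg (Finset.subset_univ _)
                (fun j _ _ => Finset.sum_nonneg fun i _ => Complex.normSq_nonneg _)
          _ = r := tnn_frobenius B hBB
      have hbC : ∑ l : Fin N, ∑ i : Fin r, Complex.normSq (C i (fn l)) ≤ (r : ℝ) := by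
        have hinj : Function.Injective fn := Fin.castLE_injective _
        calc ∑ l : Fin N, ∑ i : Fin r, Complex.normSq (C i (fn l))
            = ∑ j ∈ Finset.univ.image fn, ∑ i : Fin r, Complex.normSq (C i j) := by
              rw [Finset.sum_image (fun x _ y _ h => hinj h)]
          _ ≤ ∑ j : Fin n, ∑ i : Fin r, Complex.normSq (C i j) :=
              Finset.sum_le_sum_of_subset_of_nonneg (Finset.subset_univ _)
                (fun j _ _ => Finset.sum_nonneg fun i _ => Complex.normSq_nonneg _)
          _ = r := tnn_frobenius C hCC
      linarith
    have hcl : ∀ l : Fin N,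
          ‖(∑ i : Fin r, B i (fm l) * (starRingEnd ℂ) (C i (fn l)))‖ ≤ t' (l : ℕ) := by
      intro l
      calc ‖∑ i : Fin r, B i (fm l) * (starRingEnd ℂ) (C i (fn l))‖
          ≤ ∑ i : Fin r, ‖B i (fm l) * (starRingEnd ℂ) (C i (fn l))‖ :=
            norm_sum_le _ _
        _ ≤ ∑ i : Fin r, (Complex.normSq (B i (fm l)) + Complex.normSq (C i (fn l))) / 2 := by
            apply Finset.sum_le_sum
            intro i _
            rw [norm_mul, Complex.norm_conj]
            have hb := Complex.sq_norm (B i (fm l))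
            have hc := Complex.sq_norm (C i (fn l))
            have hb0 := norm_nonneg (B i (fm l))
            have hc0 := norm_nonneg (C i (fn l))
            nlinarith [sq_nonneg (‖B i (fm l)‖ - ‖C i (fn l)‖)]
        _ = t' (l : ℕ) := by
            rw [heta l, ← Finset.sum_div, Finset.sum_add_distrib]
    calc ‖∑ l : Fin N, ((σ (l : ℕ) : ℂ)) *
            ∑ i : Fin r, B i (fm l) * (starRingEnd ℂ) (C i (fn l))‖
        ≤ ∑ l : Fin N, ‖((σ (l : ℕ) : ℂ)) *
            ∑ i : Fin r, B i (fm l) * (starRingEnd ℂ) (C i (fn l))‖ := norm_sum_le _ _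
      _ ≤ ∑ l : Fin N, σ (l : ℕ) * t' (l : ℕ) := by
          apply Finset.sum_le_sum
          intro l _
          rw [norm_mul, Complex.norm_real, Real.norm_of_nonneg (hσ0 _)]
          exact mul_le_mul_of_nonneg_left (hcl l) (hσ0 _)
      _ = ∑ l ∈ Finset.range N, σ l * t' l := Fin.sum_univ_eq_sum_range (fun l => σ l * t' l) N
      _ ≤ ∑ l ∈ Finset.range r, σ l := tnn_rearrange σ t' N r hr hσ0 hσa ht'0 ht'1 hsum
      _ = M := hM.symm
  · -- arithmetic
    rw [Finset.sum_Ico_eq_sub σ hr, hM]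
end

section
/- The singular value shrinkage operator solves the nuclear norm proximal problem for complex matrices: for τ > 0 and a complex m×n matrix Y with SVD Y = U Σ Vᴴ, the matrix D_τ(Y) = U diag(max(σ_i − τ, 0)) Vᴴ is a minimizer of (1/2)‖X − Y‖_F² + τ‖X‖_* over complex m×n matrices X. -/
open Matrix
open scoped ComplexOrder
open scoped ComplexConjugate

/-- Frobenius norm of a complex matrix. -/
noncomputable def frobNorm {m n : ℕ} (A : Matrix (Fin m) (Fin n) ℂ) : ℝ :=
  Real.sqrt (∑ i, ∑ j, ‖A i j‖ ^ 2)

/-- Nuclear norm of a complex matrix: the sum of its singular values, i.e. of the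
square roots of the eigenvalues of `Xᴴ * X`. -/
noncomputable def nuclearNorm {m n : ℕ} (X : Matrix (Fin m) (Fin n) ℂ) : ℝ :=
  ∑ i, Real.sqrt ((Matrix.posSemidef_conjTranspose_mul_self X).isHermitian.eigenvalues i)

section Aux
open scoped ComplexConjugate

-- single-point sums
lemma sum_ite_nat_eq {k : ℕ} {M : Type*} [AddCommMonoid M] (p : ℕ) (f : Fin k → M) :
    (∑ j : Fin k, if p = (j : ℕ) then f j else 0) = if h : p < k then f ⟨p, h⟩ else 0 := by
  by_cases h : p < k
  · rw [dif_pos h, Finset.sum_eq_single ⟨p, h⟩]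
    · simp
    · intro j _ hj
      rw [if_neg]
      exact fun hc => hj (by ext; simp [hc.symm])
    · simp
  · rw [dif_neg h, Finset.sum_eq_zero]
    intro j _
    rw [if_neg]
    exact fun hc => h (hc ▸ j.isLt)

-- (Aᴴ*A) j j entry
lemma diag_conjT_mul_self {m k : ℕ} (A : Matrix (Fin m) (Fin k) ℂ) (j : Fin k) :
    (Aᴴ * A) j j = ((∑ i, ‖A i j‖ ^ 2 : ℝ) : ℂ) := by
  simp [mul_apply, conjTranspose_apply, ← Complex.normSq_eq_norm_sq, Complex.normSq_eq_conj_mul_self]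

-- trace of Aᴴ*B
lemma trace_conjT_mul {m k : ℕ} (A B : Matrix (Fin m) (Fin k) ℂ) :
    trace (Aᴴ * B) = ∑ j, ∑ i, conj (A i j) * B i j := by
  simp [trace, Matrix.diag, mul_apply, conjTranspose_apply]

-- column Cauchy-Schwarz
lemma col_cauchy_schwarz {m : ℕ} (a b : Fin m → ℂ) :
    ‖∑ i, conj (a i) * b i‖ ≤
      Real.sqrt (∑ i, ‖a i‖ ^ 2) * Real.sqrt (∑ i, ‖b i‖ ^ 2) := by
  classical
  let x : EuclideanSpace ℂ (Fin m) := (WithLp.equiv 2 _).symm a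
  let y : EuclideanSpace ℂ (Fin m) := (WithLp.equiv 2 _).symm b
  have h := norm_inner_le_norm (𝕜 := ℂ) x y
  rw [EuclideanSpace.norm_eq, EuclideanSpace.norm_eq] at h
  simpa [x, y, PiLp.inner_apply, RCLike.inner_apply, mul_comm] using h

-- single-point sums
noncomputable def rectDiag (m n : ℕ) (a : ℕ → ℂ) : Matrix (Fin m) (Fin n) ℂ :=
  Matrix.of (fun (i : Fin m) (j : Fin n) => if (i : ℕ) = (j : ℕ) then a i else 0)

lemma rectDiag_conjT_mul {m n : ℕ} (a b : ℕ → ℂ) :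
    (rectDiag m n a)ᴴ * rectDiag m n b =
      diagonal (fun j : Fin n => if (j : ℕ) < m then conj (a j) * b j else 0) := by
  ext j k
  simp only [mul_apply, conjTranspose_apply, rectDiag, of_apply, diagonal_apply]
  by_cases hjk : j = k
  · subst hjk
    have : ∀ i : Fin m, (star (if (i:ℕ) = (j:ℕ) then a i else 0)) * (if (i:ℕ) = (j:ℕ) then b i else 0)
        = if (j:ℕ) = (i:ℕ) then conj (a j) * b j else 0 := by
      intro i
      by_cases h : (i:ℕ) = (j:ℕ)
      · rw [if_pos h, if_pos h, if_pos h.symm, h, Complex.star_def]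
      · rw [if_neg h, if_neg h, if_neg (fun hc => h hc.symm), star_zero, zero_mul]
    rw [Finset.sum_congr rfl (fun i _ => this i), sum_ite_nat_eq (j:ℕ) (fun _ => conj (a j) * b j)]
    by_cases h : (j:ℕ) < m <;> simp [h]
  · rw [if_neg hjk, Finset.sum_eq_zero]
    intro i _
    by_cases h : (i:ℕ) = (j:ℕ)
    · rw [if_pos h, if_neg, mul_zero]
      exact fun hc => hjk (by ext; omega)
    · simp [h]

-- (Aᴴ * diagonal w * A) j j
lemma diag_sandwich {k l : ℕ} (Z : Matrix (Fin k) (Fin l) ℂ) (w : Fin k → ℂ) (j : Fin l) :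
    (Zᴴ * diagonal w * Z) j j = ∑ i, w i * ((‖Z i j‖ ^ 2 : ℝ) : ℂ) := by
  rw [mul_apply]
  congr 1
  funext i
  rw [Matrix.mul_diagonal, conjTranspose_apply]
  rw [show ((‖Z i j‖ ^ 2 : ℝ) : ℂ) = conj (Z i j) * Z i j by
    rw [← Complex.normSq_eq_norm_sq, Complex.normSq_eq_conj_mul_self], Complex.star_def]
  ring

-- sum of sqrt of eigenvalues from any unitary diagonalization
lemma sum_sqrt_eigenvalues {k : ℕ} {A : Matrix (Fin k) (Fin k) ℂ} (hA : A.PosSemidef)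
    (W : Matrix (Fin k) (Fin k) ℂ) (hW : Wᴴ * W = 1) (hW' : W * Wᴴ = 1)
    (μ : Fin k → ℝ) (hμ : ∀ i, 0 ≤ μ i)
    (h : A = W * diagonal (fun i => (μ i : ℂ)) * Wᴴ) :
    ∑ i, Real.sqrt (hA.isHermitian.eigenvalues i) = ∑ i, Real.sqrt (μ i) := by
  set B : Matrix (Fin k) (Fin k) ℂ := W * diagonal (fun i => ((Real.sqrt (μ i) : ℝ) : ℂ)) * Wᴴ with hB
  have hBpsd : B.PosSemidef := by
    apply Matrix.PosSemidef.mul_mul_conjTranspose_same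
    refine posSemidef_diagonal_iff.mpr fun i => ?_
    rw [RCLike.nonneg_iff]
    simp [Real.sqrt_nonneg]
  have hBsq : B ^ 2 = A := by
    rw [pow_two, hB, h]
    have : diagonal (fun i => ((Real.sqrt (μ i) : ℝ) : ℂ)) * (Wᴴ * W) *
        diagonal (fun i => ((Real.sqrt (μ i) : ℝ) : ℂ)) = diagonal (fun i => ((μ i : ℝ) : ℂ)) := by
      rw [hW, mul_one, diagonal_mul_diagonal]
      rw [show (fun i => ((Real.sqrt (μ i) : ℂ) * (Real.sqrt (μ i) : ℂ))) =
        (fun i => ((μ i : ℝ) : ℂ)) from funext fun i => by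
          rw [← Complex.ofReal_mul, Real.mul_self_sqrt (hμ i)]]
    calc W * diagonal (fun i => ((Real.sqrt (μ i) : ℝ) : ℂ)) * Wᴴ *
          (W * diagonal (fun i => ((Real.sqrt (μ i) : ℝ) : ℂ)) * Wᴴ)
        = W * (diagonal (fun i => ((Real.sqrt (μ i) : ℝ) : ℂ)) * (Wᴴ * W) *
            diagonal (fun i => ((Real.sqrt (μ i) : ℝ) : ℂ))) * Wᴴ := by
          simp only [Matrix.mul_assoc]
      _ = W * diagonal (fun i => ((μ i : ℝ) : ℂ)) * Wᴴ := by rw [this]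
  open scoped MatrixOrder in
  have hBeq : B = CFC.sqrt A :=
    ((CFC.sqrt_eq_iff A B hA.nonneg hBpsd.nonneg).mpr (by rw [← pow_two]; exact hBsq)).symm
  open scoped MatrixOrder in
  have htr : trace B = trace (CFC.sqrt A) := by rw [hBeq]
  have h1 : trace B = ((∑ i, Real.sqrt (μ i) : ℝ) : ℂ) := by
    rw [hB, trace_mul_cycle, hW, one_mul, trace_diagonal]
    push_cast
    rfl
  open scoped MatrixOrder in
  have h2 : trace (CFC.sqrt A) = ((∑ i, Real.sqrt (hA.isHermitian.eigenvalues i) : ℝ) : ℂ) := by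
    rw [CFC.sqrt_eq_cfc, cfc_nnreal_eq_real _ A hA.nonneg, hA.1.cfc_eq, IsHermitian.cfc,
      Unitary.conjStarAlgAut_apply, trace_mul_cycle, Unitary.coe_star_mul_self, one_mul, trace_diagonal]
    push_cast
    simp [hA.eigenvalues_nonneg]
  rw [h1, h2] at htr
  exact_mod_cast htr.symm


lemma nuclear_duality {m n : ℕ} (X G : Matrix (Fin m) (Fin n) ℂ)
    (V : Matrix (Fin n) (Fin n) ℂ) (hV1 : Vᴴ * V = 1) (hV2 : V * Vᴴ = 1)
    (ν : Fin n → ℝ) (hν0 : ∀ j, 0 ≤ ν j) (hν1 : ∀ j, ν j ≤ 1)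
    (hGG : Gᴴ * G = V * diagonal (fun j => (ν j : ℂ)) * Vᴴ) :
    (trace (Xᴴ * G)).re ≤ nuclearNorm X := by
  set hP := Matrix.posSemidef_conjTranspose_mul_self X with hPdef
  set W : Matrix (Fin n) (Fin n) ℂ := (hP.isHermitian.eigenvectorUnitary : Matrix (Fin n) (Fin n) ℂ) with hWdef
  set lam := hP.isHermitian.eigenvalues with hlam
  have hW1 : Wᴴ * W = 1 := by
    rw [← star_eq_conjTranspose]
    exact Unitary.coe_star_mul_self hP.isHermitian.eigenvectorUnitary
  have hW2 : W * Wᴴ = 1 := by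
    rw [← star_eq_conjTranspose]
    exact Unitary.coe_mul_star_self hP.isHermitian.eigenvectorUnitary
  have hdiag : Wᴴ * (Xᴴ * X) * W = diagonal (fun j => ((lam j : ℝ) : ℂ)) := by
    rw [← star_eq_conjTranspose]
    have := hP.isHermitian.conjStarAlgAut_star_eigenvectorUnitary
    rw [Unitary.conjStarAlgAut_apply] at this
    simpa [W, lam, Function.comp_def] using this
  -- column norms of X*W
  have colA : ∀ j, (∑ i, ‖(X * W) i j‖ ^ 2) = lam j := by
    intro j
    have h1 : ((X * W)ᴴ * (X * W)) = Wᴴ * (Xᴴ * X) * W := by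
      rw [conjTranspose_mul]; simp only [Matrix.mul_assoc]
    have h2 := diag_conjT_mul_self (X * W) j
    rw [h1, hdiag] at h2
    have : ((lam j : ℝ) : ℂ) = ((∑ i, ‖(X * W) i j‖ ^ 2 : ℝ) : ℂ) := by
      rw [← h2, diagonal_apply_eq]
    exact_mod_cast this.symm
  -- column norms of G*W
  set Z : Matrix (Fin n) (Fin n) ℂ := Vᴴ * W with hZ
  have hZ1 : ∀ j, (∑ k, ‖Z k j‖ ^ 2) = 1 := by
    intro j
    have h1 : Zᴴ * Z = 1 := by
      rw [hZ, conjTranspose_mul, conjTranspose_conjTranspose, mul_assoc, ← mul_assoc V, hV2,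
        one_mul, hW1]
    have h2 := diag_conjT_mul_self Z j
    rw [h1] at h2
    have : ((∑ k, ‖Z k j‖ ^ 2 : ℝ) : ℂ) = 1 := by rw [← h2, one_apply_eq]
    exact_mod_cast this
  have colB : ∀ j, (∑ i, ‖(G * W) i j‖ ^ 2) ≤ 1 := by
    intro j
    have h1 : ((G * W)ᴴ * (G * W)) = Zᴴ * diagonal (fun k => ((ν k : ℝ) : ℂ)) * Z := by
      calc (G * W)ᴴ * (G * W) = Wᴴ * (Gᴴ * G) * W := by
            rw [conjTranspose_mul]; simp only [Matrix.mul_assoc]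
        _ = Wᴴ * (V * diagonal (fun k => ((ν k : ℝ) : ℂ)) * Vᴴ) * W := by rw [hGG]
        _ = Zᴴ * diagonal (fun k => ((ν k : ℝ) : ℂ)) * Z := by
            rw [hZ, conjTranspose_mul, conjTranspose_conjTranspose]
            simp only [Matrix.mul_assoc]
    have h2 := diag_conjT_mul_self (G * W) j
    rw [h1, diag_sandwich] at h2
    have h3 : (∑ i, ‖(G * W) i j‖ ^ 2) = ∑ k, ν k * ‖Z k j‖ ^ 2 := by
      have : ((∑ i, ‖(G * W) i j‖ ^ 2 : ℝ) : ℂ) = ((∑ k, ν k * ‖Z k j‖ ^ 2 : ℝ) : ℂ) := by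
        rw [← h2]; push_cast; rfl
      exact_mod_cast this
    rw [h3, ← hZ1 j]
    apply Finset.sum_le_sum
    intro k _
    have := mul_le_of_le_one_left (mul_self_nonneg ‖Z k j‖) (hν1 k)
    calc ν k * ‖Z k j‖ ^ 2 ≤ 1 * ‖Z k j‖ ^ 2 :=
          mul_le_mul_of_nonneg_right (hν1 k) (sq_nonneg _)
      _ = ‖Z k j‖ ^ 2 := one_mul _
  -- rewrite trace
  have htr : trace (Xᴴ * G) = ∑ j, ∑ i, conj ((X * W) i j) * ((G * W) i j) := by
    rw [← trace_conjT_mul]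
    have h1 : ((X * W)ᴴ * (G * W)) = Wᴴ * (Xᴴ * G) * W := by
      rw [conjTranspose_mul]; simp only [Matrix.mul_assoc]
    rw [h1, trace_mul_cycle, hW2, one_mul]
  rw [htr, Complex.re_sum]
  have key : ∀ j, (∑ i, conj ((X * W) i j) * ((G * W) i j)).re ≤ Real.sqrt (lam j) := by
    intro j
    calc (∑ i, conj ((X * W) i j) * ((G * W) i j)).re
        ≤ ‖∑ i, conj ((X * W) i j) * ((G * W) i j)‖ := Complex.re_le_norm _
      _ ≤ Real.sqrt (∑ i, ‖(X * W) i j‖ ^ 2) * Real.sqrt (∑ i, ‖(G * W) i j‖ ^ 2) :=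
          col_cauchy_schwarz _ _
      _ ≤ Real.sqrt (lam j) * 1 := by
          rw [colA j]
          exact mul_le_mul_of_nonneg_left
            (Real.sqrt_le_one.mpr (colB j)) (Real.sqrt_nonneg _)
      _ = Real.sqrt (lam j) := mul_one _
  exact Finset.sum_le_sum (fun j _ => key j)

lemma frob_sq {m n : ℕ} (A : Matrix (Fin m) (Fin n) ℂ) :
    frobNorm A ^ 2 = ∑ i, ∑ j, ‖A i j‖ ^ 2 := by
  rw [frobNorm]
  exact Real.sq_sqrt (by positivity)

lemma frob_expand {m n : ℕ} (P Q : Matrix (Fin m) (Fin n) ℂ) :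
    (∑ i, ∑ j, ‖(P + Q) i j‖ ^ 2) =
      (∑ i, ∑ j, ‖P i j‖ ^ 2) + 2 * (∑ i, ∑ j, (conj (P i j) * Q i j).re)
        + (∑ i, ∑ j, ‖Q i j‖ ^ 2) := by
  have hpt : ∀ z w : ℂ, ‖z + w‖ ^ 2 = ‖z‖ ^ 2 + 2 * (conj z * w).re + ‖w‖ ^ 2 := by
    intro z w
    simp only [Complex.sq_norm, Complex.normSq_apply, Complex.add_re,
      Complex.add_im, Complex.mul_re, Complex.conj_re, Complex.conj_im]
    ring
  calc (∑ i, ∑ j, ‖(P + Q) i j‖ ^ 2)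
      = ∑ i, ∑ j, (‖P i j‖ ^ 2 + 2 * (conj (P i j) * Q i j).re + ‖Q i j‖ ^ 2) := by
        refine Finset.sum_congr rfl fun i _ => Finset.sum_congr rfl fun j _ => ?_
        rw [Matrix.add_apply]
        exact hpt _ _
    _ = _ := by
        simp only [Finset.sum_add_distrib, Finset.mul_sum]

end Aux

section Aux2
open scoped ComplexConjugate

lemma sandwich_calc {m n : ℕ} (U : Matrix (Fin m) (Fin m) ℂ) (hU1 : Uᴴ * U = 1)
    (V : Matrix (Fin n) (Fin n) ℂ) (A B : Matrix (Fin m) (Fin n) ℂ) :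
    (U * A * Vᴴ)ᴴ * (U * B * Vᴴ) = V * (Aᴴ * B) * Vᴴ := by
  rw [conjTranspose_mul, conjTranspose_mul, conjTranspose_conjTranspose]
  have h : V * (Aᴴ * Uᴴ) * (U * B * Vᴴ) = V * (Aᴴ * ((Uᴴ * U) * (B * Vᴴ))) := by
    simp only [Matrix.mul_assoc]
  rw [h, hU1, Matrix.one_mul]
  simp only [Matrix.mul_assoc]

end Aux2

set_option maxHeartbeats 2000000 in
theorem singular_value_shrinkage_solves_prox {m n : ℕ} (τ : ℝ) (hτ : 0 < τ)
    (Y : Matrix (Fin m) (Fin n) ℂ)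
    (U : Matrix (Fin m) (Fin m) ℂ) (V : Matrix (Fin n) (Fin n) ℂ) (σ : ℕ → ℝ)
    (hU : Uᴴ * U = 1 ∧ U * Uᴴ = 1)
    (hV : Vᴴ * V = 1 ∧ V * Vᴴ = 1)
    (hσ0 : ∀ k, 0 ≤ σ k)
    (hY : Y = U * Matrix.of (fun (i : Fin m) (j : Fin n) =>
      if (i : ℕ) = (j : ℕ) then (σ (i : ℕ) : ℂ) else 0) * Vᴴ) :
    ∀ X : Matrix (Fin m) (Fin n) ℂ,
      (1 / 2) * frobNorm ((U * Matrix.of (fun (i : Fin m) (j : Fin n) =>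
          if (i : ℕ) = (j : ℕ) then ((max (σ (i : ℕ) - τ) 0 : ℝ) : ℂ) else 0) * Vᴴ) - Y) ^ 2 +
        τ * nuclearNorm (U * Matrix.of (fun (i : Fin m) (j : Fin n) =>
          if (i : ℕ) = (j : ℕ) then ((max (σ (i : ℕ) - τ) 0 : ℝ) : ℂ) else 0) * Vᴴ) ≤
      (1 / 2) * frobNorm (X - Y) ^ 2 + τ * nuclearNorm X := by
  obtain ⟨hU1, hU2⟩ := hU
  obtain ⟨hV1, hV2⟩ := hV
  intro X
  have hτ' : τ ≠ 0 := ne_of_gt hτ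
  -- abbreviations
  let d : ℕ → ℝ := fun k => max (σ k - τ) 0
  let g : ℕ → ℝ := fun k => min (σ k) τ / τ
  have hd0 : ∀ k, 0 ≤ d k := fun k => le_max_right _ _
  have hg0 : ∀ k, 0 ≤ g k := fun k => div_nonneg (le_min (hσ0 k) hτ.le) hτ.le
  have hg1 : ∀ k, g k ≤ 1 := fun k => by
    rw [div_le_one hτ]; exact min_le_right _ _
  have hdg : ∀ k, d k * g k = d k := by
    intro k
    rcases le_total (σ k) τ with h | h
    · have hzero : d k = 0 := max_eq_right (by linarith)
      rw [hzero, zero_mul]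
    · have hmin : min (σ k) τ = τ := min_eq_right h
      show d k * (min (σ k) τ / τ) = d k
      rw [hmin, div_self hτ', mul_one]
  have hsum : ∀ k, d k + τ * g k = σ k := by
    intro k
    rcases le_total (σ k) τ with h | h
    · show max (σ k - τ) 0 + τ * (min (σ k) τ / τ) = σ k
      rw [max_eq_right (by linarith), min_eq_left h]
      field_simp
      ring
    · show max (σ k - τ) 0 + τ * (min (σ k) τ / τ) = σ k
      rw [max_eq_left (by linarith), min_eq_right h, div_self hτ']
      ring
  set Cd := rectDiag m n (fun k => ((d k : ℝ) : ℂ)) with hCd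
  set Cg := rectDiag m n (fun k => ((g k : ℝ) : ℂ)) with hCgdef
  set Cs := rectDiag m n (fun k => ((σ k : ℝ) : ℂ)) with hCs
  set D := U * Cd * Vᴴ with hDdef
  set G := U * Cg * Vᴴ with hGdef
  have e1 : U * Matrix.of (fun (i : Fin m) (j : Fin n) =>
      if (i : ℕ) = (j : ℕ) then ((max (σ (i : ℕ) - τ) 0 : ℝ) : ℂ) else 0) * Vᴴ = D := rfl
  have hY' : Y = U * Cs * Vᴴ := hY
  rw [e1]
  -- D - Y = (-τ) • G
  have hrd : Cd - Cs = ((-τ : ℝ) : ℂ) • Cg := by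
    ext i j
    simp only [hCd, hCs, hCgdef, rectDiag, Matrix.sub_apply, Matrix.smul_apply, of_apply, smul_eq_mul]
    by_cases h : (i : ℕ) = (j : ℕ)
    · rw [if_pos h, if_pos h, if_pos h]
      have hre : d (i : ℕ) - σ (i : ℕ) = -τ * g (i : ℕ) := by
        have := hsum (i : ℕ); linarith
      exact_mod_cast congrArg Complex.ofReal hre
    · rw [if_neg h, if_neg h, if_neg h, sub_zero, mul_zero]
  have hDY : D - Y = ((-τ : ℝ) : ℂ) • G := by
    rw [hDdef, hY', hGdef, ← Matrix.sub_mul, ← Matrix.mul_sub, hrd, Matrix.mul_smul, Matrix.smul_mul]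
  -- Gᴴ G decomposition
  set ν : Fin n → ℝ := fun j => if (j : ℕ) < m then (g (j : ℕ)) ^ 2 else 0 with hν
  have hν0 : ∀ j, 0 ≤ ν j := by
    intro j
    simp only [hν]
    split
    · exact sq_nonneg _
    · exact le_rfl
  have hν1 : ∀ j, ν j ≤ 1 := by
    intro j; simp only [hν]; split
    · exact pow_le_one₀ (hg0 _) (hg1 _)
    · exact zero_le_one
  have hGG : Gᴴ * G = V * diagonal (fun j => ((ν j : ℝ) : ℂ)) * Vᴴ := by
    rw [hGdef, sandwich_calc U hU1 V Cg Cg, hCgdef, rectDiag_conjT_mul]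
    have hfun : (fun j : Fin n => if (j : ℕ) < m then
        conj ((g (j : ℕ) : ℝ) : ℂ) * ((g (j : ℕ) : ℝ) : ℂ) else 0) =
        fun j => ((ν j : ℝ) : ℂ) := by
      funext j
      simp only [hν]
      by_cases h : (j : ℕ) < m
      · rw [if_pos h, if_pos h, Complex.conj_ofReal, ← Complex.ofReal_mul, sq]
      · rw [if_neg h, if_neg h, Complex.ofReal_zero]
    rw [hfun]
  -- nuclear norm of D
  set μ : Fin n → ℝ := fun j => if (j : ℕ) < m then (d (j : ℕ)) ^ 2 else 0 with hμ
  have hμ0 : ∀ j, 0 ≤ μ j := by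
    intro j
    simp only [hμ]
    split
    · exact sq_nonneg _
    · exact le_rfl
  have hDD : Dᴴ * D = V * diagonal (fun j => ((μ j : ℝ) : ℂ)) * Vᴴ := by
    rw [hDdef, sandwich_calc U hU1 V Cd Cd, hCd, rectDiag_conjT_mul]
    have hfun : (fun j : Fin n => if (j : ℕ) < m then
        conj ((d (j : ℕ) : ℝ) : ℂ) * ((d (j : ℕ) : ℝ) : ℂ) else 0) =
        fun j => ((μ j : ℝ) : ℂ) := by
      funext j
      simp only [hμ]
      by_cases h : (j : ℕ) < m
      · rw [if_pos h, if_pos h, Complex.conj_ofReal, ← Complex.ofReal_mul, sq]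
      · rw [if_neg h, if_neg h, Complex.ofReal_zero]
    rw [hfun]
  have hND : nuclearNorm D = ∑ j : Fin n, (if (j : ℕ) < m then d (j : ℕ) else 0) := by
    rw [show nuclearNorm D = ∑ i, Real.sqrt
      ((Matrix.posSemidef_conjTranspose_mul_self D).isHermitian.eigenvalues i) from rfl]
    rw [sum_sqrt_eigenvalues (Matrix.posSemidef_conjTranspose_mul_self D) V hV1 hV2 μ hμ0 hDD]
    refine Finset.sum_congr rfl fun j _ => ?_
    simp only [hμ]
    by_cases h : (j : ℕ) < m
    · rw [if_pos h, if_pos h, Real.sqrt_sq (hd0 _)]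
    · rw [if_neg h, if_neg h, Real.sqrt_zero]
  -- trace(Dᴴ G)
  have hTD : (trace (Dᴴ * G)).re = ∑ j : Fin n, (if (j : ℕ) < m then d (j : ℕ) else 0) := by
    rw [hDdef, hGdef, sandwich_calc U hU1 V Cd Cg, trace_mul_cycle, hV1, one_mul, hCd, hCgdef,
      rectDiag_conjT_mul, trace_diagonal]
    rw [show (∑ j : Fin n, if (j : ℕ) < m then conj ((d (j : ℕ) : ℝ) : ℂ) * ((g (j : ℕ) : ℝ) : ℂ)
        else 0) = ((∑ j : Fin n, if (j : ℕ) < m then d (j : ℕ) * g (j : ℕ) else 0 : ℝ) : ℂ) by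
      rw [Complex.ofReal_sum]
      refine Finset.sum_congr rfl fun j _ => ?_
      by_cases h : (j : ℕ) < m
      · rw [if_pos h, if_pos h, Complex.conj_ofReal, Complex.ofReal_mul]
      · rw [if_neg h, if_neg h, Complex.ofReal_zero]]
    rw [Complex.ofReal_re]
    refine Finset.sum_congr rfl fun j _ => ?_
    by_cases h : (j : ℕ) < m
    · rw [if_pos h, if_pos h, hdg]
    · rw [if_neg h, if_neg h]
  -- duality bound
  have hTX : (trace (Xᴴ * G)).re ≤ nuclearNorm X :=
    nuclear_duality X G V hV1 hV2 ν hν0 hν1 hGG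
  -- Frobenius expansion
  rw [frob_sq, frob_sq]
  set S : ℝ := ∑ i, ∑ j, (conj ((X - D) i j) * ((D - Y) i j)).re with hSdef
  have hexp : (∑ i, ∑ j, ‖(X - Y) i j‖ ^ 2) =
      (∑ i, ∑ j, ‖(X - D) i j‖ ^ 2) + 2 * S + (∑ i, ∑ j, ‖(D - Y) i j‖ ^ 2) := by
    have h := frob_expand (X - D) (D - Y)
    rw [sub_add_sub_cancel] at h
    exact h
  have hS : S = -τ * ((trace (Xᴴ * G)).re - (trace (Dᴴ * G)).re) := by
    have h1 : S = -τ * (trace ((X - D)ᴴ * G)).re := by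
      calc S = ∑ i, ∑ j, (-τ) * (conj ((X - D) i j) * G i j).re := by
            rw [hSdef]
            refine Finset.sum_congr rfl fun i _ => Finset.sum_congr rfl fun j _ => ?_
            rw [hDY, Matrix.smul_apply, smul_eq_mul]
            rw [show conj ((X - D) i j) * (((-τ : ℝ) : ℂ) * G i j)
              = ((-τ : ℝ) : ℂ) * (conj ((X - D) i j) * G i j) by ring]
            simp [Complex.mul_re]
        _ = -τ * ∑ i, ∑ j, (conj ((X - D) i j) * G i j).re := by
            rw [Finset.mul_sum]
            exact Finset.sum_congr rfl fun i _ => (Finset.mul_sum _ _ _).symm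
        _ = -τ * ∑ j, ∑ i, (conj ((X - D) i j) * G i j).re := by rw [Finset.sum_comm]
        _ = -τ * (trace ((X - D)ᴴ * G)).re := by
            rw [trace_conjT_mul, Complex.re_sum]
            congr 1
            exact Finset.sum_congr rfl fun j _ => (Complex.re_sum _ _).symm
    rw [h1, conjTranspose_sub, Matrix.sub_mul, trace_sub]
    simp [Complex.sub_re]
  have hF2nn : 0 ≤ ∑ i, ∑ j, ‖(X - D) i j‖ ^ 2 := by positivity
  rw [hexp, hND]
  set ND := ∑ j : Fin n, (if (j : ℕ) < m then d (j : ℕ) else 0) with hNDdef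
  rw [hTD] at hS
  have key : 0 ≤ τ * (nuclearNorm X - (trace (Xᴴ * G)).re) :=
    mul_nonneg hτ.le (sub_nonneg.mpr hTX)
  nlinarith [hS, hF2nn, key]
end
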